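/- In the avg-EQ reduction instance built from a simple graph H = (V, E) and an integer k ≥ 4 with |V| + |E| ≥ k², under avg-EQ utilities, the following holds: if a coalition C blocks the coalition structure Γ and the edge player e' belongs to C for some edge e = xy ∈ E, then all four players b_{x,e}, b_{y,e}, x', y' belong to C, and |C| < k'. -/

import Mathlib

set_option maxHeartbeats 1000000


open Finset
open scoped Classical

section AHGDefs

variable {N : Type*} [Fintype N] [DecidableEq N]

/-- The set of friends of player `i` inside coalition `C`. -/
noncomputable def friendsIn (G : SimpleGraph N) (C : Finset N) (i : N) : Finset N :=
  C.filter fun j => G.Adj i j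

/-- The friend-oriented valuation of coalition `C` by player `i`:
`val_i(C) = n·|F_i ∩ C| − |E_i ∩ C|`. -/
noncomputable def fval (G : SimpleGraph N) (C : Finset N) (i : N) : ℤ :=
  (Fintype.card N : ℤ) * ((friendsIn G C i).card : ℤ)
    - ((C.filter fun j => ¬ G.Adj i j ∧ j ≠ i).card : ℤ)

/-- Average-based equal-treatment utility. -/
noncomputable def utilAvgEQ (G : SimpleGraph N) (C : Finset N) (i : N) : ℚ :=
  (∑ c ∈ insert i (friendsIn G C i), (fval G C c : ℚ)) /
    ((insert i (friendsIn G C i)).card : ℚ)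

/-- Average-based altruistic-treatment utility with weight `w`. -/
noncomputable def utilAvgAL (G : SimpleGraph N) (w : ℚ) (C : Finset N) (i : N) : ℚ :=
  (fval G C i : ℚ) +
    w * (if (friendsIn G C i).Nonempty then
          (∑ c ∈ friendsIn G C i, (fval G C c : ℚ)) / ((friendsIn G C i).card : ℚ)
         else 0)

/-- Min-based equal-treatment utility. -/
noncomputable def utilMinEQ (G : SimpleGraph N) (C : Finset N) (i : N) : ℤ :=
  (insert i (friendsIn G C i)).inf' (insert_nonempty _ _) (fval G C)

/-- Min-based altruistic-treatment utility with weight `w`. -/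
noncomputable def utilMinAL (G : SimpleGraph N) (w : ℤ) (C : Finset N) (i : N) : ℤ :=
  fval G C i +
    w * (if h : (friendsIn G C i).Nonempty then (friendsIn G C i).inf' h (fval G C) else 0)

/-- A coalition structure (partition of the players), given as the map sending
each player to its coalition. -/
structure CoalitionStructure (N : Type*) [Fintype N] [DecidableEq N] where
  part : N → Finset N
  mem_part : ∀ i, i ∈ part i
  part_eq : ∀ i j, j ∈ part i → part j = part i

/-- A (nonempty) coalition `C` blocks the coalition structure `Γ`. -/
def Blocks {α : Type*} [LT α] (util : Finset N → N → α) (Γ : CoalitionStructure N)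
    (C : Finset N) : Prop :=
  C.Nonempty ∧ ∀ i ∈ C, util (Γ.part i) i < util C i

/-- Core stability: no nonempty coalition blocks `Γ`. -/
def CoreStable {α : Type*} [LT α] (util : Finset N → N → α)
    (Γ : CoalitionStructure N) : Prop :=
  ¬ ∃ C : Finset N, Blocks util Γ C

/-- The base clique of a `(d,k')`-dome gadget on `P` with top player `top`
and mid players `mid`. -/
noncomputable def domeBase {d : ℕ} (P : Finset N) (top : N) (mid : Fin d → N) : Finset N :=
  P \ insert top (Finset.univ.image mid)

/-- `P` carries a `(d,k')`-dome gadget of the graph `G`, with top player `top`,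
mid players `mid i` and fringe players `fringe i`. -/
structure IsDomeGadget (G : SimpleGraph N) (d k' : ℕ) (P : Finset N) (top : N)
    (mid fringe : Fin d → N) : Prop where
  card_eq : P.card = k'
  top_mem : top ∈ P
  mid_mem : ∀ i, mid i ∈ P
  mid_inj : Function.Injective mid
  mid_ne_top : ∀ i, mid i ≠ top
  fringe_mem : ∀ i, fringe i ∈ domeBase P top mid
  fringe_inj : Function.Injective fringe
  adj_iff : ∀ x ∈ P, ∀ y ∈ P, (G.Adj x y ↔
    ((x = top ∧ ∃ i, y = mid i) ∨ (y = top ∧ ∃ i, x = mid i) ∨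
     (x ∈ domeBase P top mid ∧ y ∈ domeBase P top mid ∧ x ≠ y) ∨
     (∃ i, (x = mid i ∧ y = fringe i) ∨ (y = mid i ∧ x = fringe i))))

/-- `P` carries a `(d,k')`-dome gadget with top player `top` (mid and fringe
players existentially quantified). -/
def HasDomeGadget (G : SimpleGraph N) (d k' : ℕ) (P : Finset N) (top : N) : Prop :=
  ∃ mid fringe : Fin d → N, IsDomeGadget G d k' P top mid fringe

/-- The gadget size `k' = k + 3·(k choose 2) + 1` of the average-based reductions. -/
def avgK' (k : ℕ) : ℕ := k + 3 * Nat.choose k 2 + 1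

variable {V : Type*} [Fintype V] [DecidableEq V]

/-- `Γ` is the coalition structure of the average-based reduction instances: its
coalitions are exactly the gadget player sets. -/
def IsAvgGamma (H : SimpleGraph V) (Pv : V → Finset N) (Pe : Sym2 V → Finset N)
    (Pve : V → Sym2 V → Finset N) (Γ : CoalitionStructure N) : Prop :=
  (∀ v : V, ∀ i ∈ Pv v, Γ.part i = Pv v) ∧
  (∀ e ∈ H.edgeSet, ∀ i ∈ Pe e, Γ.part i = Pe e) ∧
  (∀ (v : V), ∀ e ∈ H.edgeSet, v ∈ e → ∀ i ∈ Pve v e, Γ.part i = Pve v e)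

/-- The avg-EQ reduction instance built from the graph `H` and `k ≥ 4`:
`G` is the constructed network of friends; `Pv v` carries a `(k−1,k')`-dome gadget
with top player `vp v`, `Pe e` a `(2,k')`-dome gadget with top player `ep e`, and
`Pve v e` a `(2,k')`-dome gadget with top player `bp v e`. Each `bp v e` is further
adjacent to `vp v` and `ep e`, and there are no other edges. -/
structure AvgEQReduction (H : SimpleGraph V) (k : ℕ) (G : SimpleGraph N)
    (Pv : V → Finset N) (Pe : Sym2 V → Finset N) (Pve : V → Sym2 V → Finset N)
    (vp : V → N) (ep : Sym2 V → N) (bp : V → Sym2 V → N) : Prop where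
  dome_v : ∀ v : V, HasDomeGadget G (k - 1) (avgK' k) (Pv v) (vp v)
  dome_e : ∀ e ∈ H.edgeSet, HasDomeGadget G 2 (avgK' k) (Pe e) (ep e)
  dome_ve : ∀ (v : V), ∀ e ∈ H.edgeSet, v ∈ e →
    HasDomeGadget G 2 (avgK' k) (Pve v e) (bp v e)
  disj_vv : ∀ v w : V, v ≠ w → Disjoint (Pv v) (Pv w)
  disj_ee : ∀ e ∈ H.edgeSet, ∀ f ∈ H.edgeSet, e ≠ f → Disjoint (Pe e) (Pe f)
  disj_bb : ∀ (v : V), ∀ e ∈ H.edgeSet, v ∈ e → ∀ (w : V), ∀ f ∈ H.edgeSet, w ∈ f →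
    (v, e) ≠ (w, f) → Disjoint (Pve v e) (Pve w f)
  disj_v_e : ∀ (v : V), ∀ e ∈ H.edgeSet, Disjoint (Pv v) (Pe e)
  disj_v_b : ∀ (v w : V), ∀ f ∈ H.edgeSet, w ∈ f → Disjoint (Pv v) (Pve w f)
  disj_e_b : ∀ e ∈ H.edgeSet, ∀ (w : V), ∀ f ∈ H.edgeSet, w ∈ f →
    Disjoint (Pe e) (Pve w f)
  cover : ∀ x : N, (∃ v : V, x ∈ Pv v) ∨ (∃ e ∈ H.edgeSet, x ∈ Pe e) ∨
    (∃ (v : V), ∃ e ∈ H.edgeSet, v ∈ e ∧ x ∈ Pve v e)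
  adj_bv : ∀ (v : V), ∀ e ∈ H.edgeSet, v ∈ e → G.Adj (bp v e) (vp v)
  adj_be : ∀ (v : V), ∀ e ∈ H.edgeSet, v ∈ e → G.Adj (bp v e) (ep e)
  adj_cases : ∀ x y : N, G.Adj x y →
    (∃ v : V, x ∈ Pv v ∧ y ∈ Pv v) ∨
    (∃ e ∈ H.edgeSet, x ∈ Pe e ∧ y ∈ Pe e) ∨
    (∃ (v : V), ∃ e ∈ H.edgeSet, v ∈ e ∧ x ∈ Pve v e ∧ y ∈ Pve v e) ∨
    (∃ (v : V), ∃ e ∈ H.edgeSet, v ∈ e ∧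
      ((x = bp v e ∧ y = vp v) ∨ (y = bp v e ∧ x = vp v))) ∨
    (∃ (v : V), ∃ e ∈ H.edgeSet, v ∈ e ∧
      ((x = bp v e ∧ y = ep e) ∨ (y = bp v e ∧ x = ep e)))
end AHGDefs


section Claim3Proof

open Finset

variable {N : Type*} [Fintype N] [DecidableEq N]

private lemma mem_friendsIn {G : SimpleGraph N} {C : Finset N} {i j : N} :
    j ∈ friendsIn G C i ↔ j ∈ C ∧ G.Adj i j := by
  simp [friendsIn]

private lemma friendsIn_subset (G : SimpleGraph N) (C : Finset N) (i : N) :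
    friendsIn G C i ⊆ C := filter_subset _ _

private lemma self_not_mem_friendsIn (G : SimpleGraph N) (C : Finset N) (i : N) :
    i ∉ friendsIn G C i := by
  simp [mem_friendsIn]

/-- Cardinality of the averaging set. -/
private lemma sCard_eq (G : SimpleGraph N) (C : Finset N) (i : N) :
    (insert i (friendsIn G C i)).card = (friendsIn G C i).card + 1 := by
  rw [card_insert_of_notMem (self_not_mem_friendsIn G C i)]

private lemma fval_eq {G : SimpleGraph N} {C : Finset N} {i : N} (hi : i ∈ C) :
    fval G C i = ((Fintype.card N : ℤ) + 1) * ((friendsIn G C i).card : ℤ)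
      - (C.card : ℤ) + 1 := by
  have h1 : (C.filter fun j => G.Adj i j).card
      + (C.filter fun j => ¬ G.Adj i j).card = C.card :=
    card_filter_add_card_filter_not _
  have h2 : (C.filter fun j => ¬ G.Adj i j)
      = insert i (C.filter fun j => ¬ G.Adj i j ∧ j ≠ i) := by
    ext z
    simp only [mem_filter, mem_insert]
    constructor
    · rintro ⟨hz, ha⟩
      by_cases hzi : z = i
      · exact Or.inl hzi
      · exact Or.inr ⟨hz, ha, hzi⟩
    · rintro (rfl | ⟨hz, ha, _⟩)
      · exact ⟨hi, G.loopless.irrefl _⟩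
      · exact ⟨hz, ha⟩
  have h3 : i ∉ (C.filter fun j => ¬ G.Adj i j ∧ j ≠ i) := by simp
  have h4 : (C.filter fun j => ¬ G.Adj i j).card
      = (C.filter fun j => ¬ G.Adj i j ∧ j ≠ i).card + 1 := by
    rw [h2, card_insert_of_notMem h3]
  have h5 : (friendsIn G C i).card + ((C.filter fun j => ¬ G.Adj i j ∧ j ≠ i).card + 1)
      = C.card := by
    rw [← h4]; exact h1
  unfold fval
  have := congrArg (fun m : ℕ => (m : ℤ)) h5
  push_cast at this ⊢
  linarith

/-- The sum of valuations over the averaging set. -/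
private lemma sum_fval_eq {G : SimpleGraph N} {C : Finset N} {i : N} (hi : i ∈ C) :
    (∑ c ∈ insert i (friendsIn G C i), (fval G C c : ℚ))
      = ((Fintype.card N : ℚ) + 1)
          * (∑ c ∈ insert i (friendsIn G C i), ((friendsIn G C c).card : ℚ))
        - ((insert i (friendsIn G C i)).card : ℚ) * ((C.card : ℚ) - 1) := by
  have hmem : ∀ c ∈ insert i (friendsIn G C i), c ∈ C := by
    intro c hc
    rcases mem_insert.mp hc with rfl | hc
    · exact hi
    · exact (mem_friendsIn.mp hc).1
  have step : ∀ c ∈ insert i (friendsIn G C i), (fval G C c : ℚ)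
      = ((Fintype.card N : ℚ) + 1) * ((friendsIn G C c).card : ℚ) - (C.card : ℚ) + 1 := by
    intro c hc
    have := fval_eq (G := G) (hmem c hc)
    have := congrArg (fun z : ℤ => (z : ℚ)) this
    push_cast at this
    linarith
  rw [Finset.sum_congr rfl step, Finset.sum_add_distrib, Finset.sum_sub_distrib,
    ← Finset.mul_sum, Finset.sum_const, Finset.sum_const]
  push_cast
  ring

private lemma utilAvgEQ_eq {G : SimpleGraph N} {C : Finset N} {i : N} (hi : i ∈ C) :
    utilAvgEQ G C i
      = (((Fintype.card N : ℚ) + 1)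
          * (∑ c ∈ insert i (friendsIn G C i), ((friendsIn G C c).card : ℚ))
        - ((insert i (friendsIn G C i)).card : ℚ) * ((C.card : ℚ) - 1))
        / ((insert i (friendsIn G C i)).card : ℚ) := by
  unfold utilAvgEQ
  rw [sum_fval_eq hi]

/-- Workhorse: blocking comparison as an integer inequality. -/
private lemma util_lt_iff {G : SimpleGraph N} {C D : Finset N} {i : N}
    (hiC : i ∈ C) (hiD : i ∈ D) :
    (utilAvgEQ G D i < utilAvgEQ G C i ↔
      ((Fintype.card N : ℤ) + 1) *
        ((∑ c ∈ insert i (friendsIn G D i), ((friendsIn G D c).card : ℤ))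
            * ((insert i (friendsIn G C i)).card : ℤ)
          - (∑ c ∈ insert i (friendsIn G C i), ((friendsIn G C c).card : ℤ))
            * ((insert i (friendsIn G D i)).card : ℤ))
        < ((insert i (friendsIn G C i)).card : ℤ)
            * ((insert i (friendsIn G D i)).card : ℤ)
            * ((D.card : ℤ) - (C.card : ℤ))) := by
  set sC : ℚ := ((insert i (friendsIn G C i)).card : ℚ) with hsC
  set sD : ℚ := ((insert i (friendsIn G D i)).card : ℚ) with hsD
  have hsCpos : 0 < sC := by
    rw [hsC]; exact_mod_cast card_pos.mpr (insert_nonempty _ _)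
  have hsDpos : 0 < sD := by
    rw [hsD]; exact_mod_cast card_pos.mpr (insert_nonempty _ _)
  set AC : ℚ := (∑ c ∈ insert i (friendsIn G C i), ((friendsIn G C c).card : ℚ)) with hAC
  set AD : ℚ := (∑ c ∈ insert i (friendsIn G D i), ((friendsIn G D c).card : ℚ)) with hAD
  rw [utilAvgEQ_eq hiC, utilAvgEQ_eq hiD]
  rw [← hsC, ← hsD, ← hAC, ← hAD]
  rw [div_lt_div_iff₀ hsDpos hsCpos]
  have hq : ((((Fintype.card N : ℚ)) + 1) * AD - sD * ((D.card : ℚ) - 1)) * sC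
        < (((Fintype.card N : ℚ) + 1) * AC - sC * ((C.card : ℚ) - 1)) * sD
      ↔ ((Fintype.card N : ℚ) + 1) * (AD * sC - AC * sD)
        < sC * sD * ((D.card : ℚ) - (C.card : ℚ)) := by
    constructor <;> intro h <;> nlinarith [h]
  rw [hq]
  have hAC' : AC = ((∑ c ∈ insert i (friendsIn G C i), ((friendsIn G C c).card : ℤ) : ℤ) : ℚ) := by
    rw [hAC]; push_cast; ring
  have hAD' : AD = ((∑ c ∈ insert i (friendsIn G D i), ((friendsIn G D c).card : ℤ) : ℤ) : ℚ) := by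
    rw [hAD]; push_cast; ring
  rw [hAC', hAD', hsC, hsD]
  constructor <;> intro h <;> exact_mod_cast h


private lemma blocks_ineq {G : SimpleGraph N} {Γ : CoalitionStructure N} {C : Finset N}
    (hblock : Blocks (utilAvgEQ G) Γ C) {c : N} (hc : c ∈ C) {P : Finset N}
    (hpart : Γ.part c = P) :
    ((Fintype.card N : ℤ) + 1) *
        ((∑ g ∈ insert c (friendsIn G P c), ((friendsIn G P g).card : ℤ))
            * ((insert c (friendsIn G C c)).card : ℤ)
          - (∑ g ∈ insert c (friendsIn G C c), ((friendsIn G C g).card : ℤ))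
            * ((insert c (friendsIn G P c)).card : ℤ))
        < ((insert c (friendsIn G C c)).card : ℤ) * ((insert c (friendsIn G P c)).card : ℤ)
            * ((P.card : ℤ) - (C.card : ℤ)) := by
  have hcP : c ∈ P := hpart ▸ Γ.mem_part c
  have h := hblock.2 c hc
  rw [hpart] at h
  exact (util_lt_iff hc hcP).mp h

/-! ### Gadget structure lemmas (for `(2,k')`-dome gadgets) -/

section Gadget

variable {G : SimpleGraph N} {K : ℕ} {P : Finset N} {top : N} {mid fringe : Fin 2 → N}

private lemma top_not_mem_base : top ∉ domeBase P top mid := by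
  intro h
  exact (mem_sdiff.mp h).2 (mem_insert_self _ _)

private lemma mid_not_mem_base (i : Fin 2) : mid i ∉ domeBase P top mid := by
  intro h
  exact (mem_sdiff.mp h).2 (mem_insert.mpr (Or.inr (mem_image.mpr ⟨i, mem_univ i, rfl⟩)))

private lemma base_subset_P : domeBase P top mid ⊆ P := sdiff_subset

private lemma fringe_ne_top (hG : IsDomeGadget G 2 K P top mid fringe) (i : Fin 2) :
    fringe i ≠ top := by
  intro h
  exact top_not_mem_base (h ▸ hG.fringe_mem i)

private lemma fringe_ne_mid (hG : IsDomeGadget G 2 K P top mid fringe) (i j : Fin 2) :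
    fringe i ≠ mid j := by
  intro h
  exact mid_not_mem_base j (h ▸ hG.fringe_mem i)

private lemma base_card (hG : IsDomeGadget G 2 K P top mid fringe) :
    (domeBase P top mid).card + 3 = K := by
  have hsub : insert top (Finset.univ.image mid) ⊆ P := by
    intro z hz
    rcases mem_insert.mp hz with rfl | hz
    · exact hG.top_mem
    · obtain ⟨i, _, rfl⟩ := mem_image.mp hz
      exact hG.mid_mem i
  have himg : (Finset.univ.image mid).card = 2 := by
    rw [Finset.card_image_of_injective _ hG.mid_inj, Finset.card_univ, Fintype.card_fin]
  have htop : top ∉ Finset.univ.image mid := by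
    intro h
    obtain ⟨i, _, hi⟩ := mem_image.mp h
    exact hG.mid_ne_top i hi
  have hcard3 : (insert top (Finset.univ.image mid)).card = 3 := by
    rw [card_insert_of_notMem htop, himg]
  have := card_sdiff_of_subset hsub
  rw [hcard3, hG.card_eq] at this
  have h3 : 3 ≤ K := by
    have := card_le_card hsub
    rw [hcard3, hG.card_eq] at this
    exact this
  unfold domeBase
  omega

private lemma adj_top_iff (hG : IsDomeGadget G 2 K P top mid fringe) {z : N} (hz : z ∈ P) :
    G.Adj top z ↔ ∃ i, z = mid i := by
  rw [hG.adj_iff top hG.top_mem z hz]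
  constructor
  · rintro (⟨_, h⟩ | ⟨_, i, h⟩ | ⟨h, _, _⟩ | ⟨i, ⟨h, _⟩ | ⟨_, h⟩⟩)
    · exact h
    · exact absurd h.symm (hG.mid_ne_top i)
    · exact absurd h top_not_mem_base
    · exact absurd h.symm (hG.mid_ne_top i)
    · exact absurd h.symm (fringe_ne_top hG i)
  · rintro ⟨i, rfl⟩
    exact Or.inl ⟨rfl, i, rfl⟩

private lemma adj_mid_iff (hG : IsDomeGadget G 2 K P top mid fringe) {i : Fin 2} {z : N}
    (hz : z ∈ P) :
    G.Adj (mid i) z ↔ z = top ∨ z = fringe i := by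
  rw [hG.adj_iff (mid i) (hG.mid_mem i) z hz]
  constructor
  · rintro (⟨h, _⟩ | ⟨h, _⟩ | ⟨h, _, _⟩ | ⟨j, ⟨hj, hz'⟩ | ⟨hz', hj⟩⟩)
    · exact absurd h (hG.mid_ne_top i)
    · exact Or.inl h
    · exact absurd h (mid_not_mem_base i)
    · have : i = j := hG.mid_inj hj
      exact Or.inr (this ▸ hz')
    · exact absurd hj.symm (fringe_ne_mid hG j i)
  · rintro (rfl | rfl)
    · exact Or.inr (Or.inl ⟨rfl, i, rfl⟩)
    · exact Or.inr (Or.inr (Or.inr ⟨i, Or.inl ⟨rfl, rfl⟩⟩))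

private lemma adj_base_iff (hG : IsDomeGadget G 2 K P top mid fringe) {g z : N}
    (hg : g ∈ domeBase P top mid) (hz : z ∈ P) :
    G.Adj g z ↔ (z ∈ domeBase P top mid ∧ z ≠ g) ∨ ∃ i, g = fringe i ∧ z = mid i := by
  rw [hG.adj_iff g (base_subset_P hg) z hz]
  constructor
  · rintro (⟨h, _⟩ | ⟨_, i, h⟩ | ⟨_, h1, h2⟩ | ⟨i, ⟨h1, h2⟩ | ⟨h1, h2⟩⟩)
    · exact absurd (h ▸ hg) top_not_mem_base
    · exact absurd (h ▸ hg) (mid_not_mem_base i)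
    · exact Or.inl ⟨h1, fun hzg => h2 (hzg ▸ rfl)⟩
    · exact absurd (h1 ▸ hg) (mid_not_mem_base i)
    · exact Or.inr ⟨i, h2, h1⟩
  · rintro (⟨h1, h2⟩ | ⟨i, rfl, rfl⟩)
    · exact Or.inr (Or.inr (Or.inl ⟨hg, h1, fun hgz => h2 hgz.symm⟩))
    · exact Or.inr (Or.inr (Or.inr ⟨i, Or.inr ⟨rfl, rfl⟩⟩))


/-! ### Friend sets inside the gadget coalition `P` -/

private lemma friendsIn_P_top (hG : IsDomeGadget G 2 K P top mid fringe) :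
    friendsIn G P top = Finset.univ.image mid := by
  ext z
  rw [mem_friendsIn]
  constructor
  · rintro ⟨hz, ha⟩
    obtain ⟨i, rfl⟩ := (adj_top_iff hG hz).mp ha
    exact mem_image.mpr ⟨i, mem_univ i, rfl⟩
  · intro hz
    obtain ⟨i, _, rfl⟩ := mem_image.mp hz
    exact ⟨hG.mid_mem i, (adj_top_iff hG (hG.mid_mem i)).mpr ⟨i, rfl⟩⟩

private lemma friendsIn_P_mid (hG : IsDomeGadget G 2 K P top mid fringe) (i : Fin 2) :
    friendsIn G P (mid i) = {top, fringe i} := by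
  ext z
  rw [mem_friendsIn]
  constructor
  · rintro ⟨hz, ha⟩
    rcases (adj_mid_iff hG hz).mp ha with rfl | rfl
    · exact mem_insert_self _ _
    · exact mem_insert.mpr (Or.inr (mem_singleton_self _))
  · intro hz
    rcases mem_insert.mp hz with rfl | hz
    · exact ⟨hG.top_mem, (adj_mid_iff hG hG.top_mem).mpr (Or.inl rfl)⟩
    · rw [mem_singleton] at hz
      subst hz
      exact ⟨base_subset_P (hG.fringe_mem i),
        (adj_mid_iff hG (base_subset_P (hG.fringe_mem i))).mpr (Or.inr rfl)⟩

private lemma friendsIn_P_fringe (hG : IsDomeGadget G 2 K P top mid fringe) (i : Fin 2) :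
    friendsIn G P (fringe i) = insert (mid i) ((domeBase P top mid).erase (fringe i)) := by
  ext z
  rw [mem_friendsIn]
  constructor
  · rintro ⟨hz, ha⟩
    rcases (adj_base_iff hG (hG.fringe_mem i) hz).mp ha with ⟨hz1, hz2⟩ | ⟨j, hj, rfl⟩
    · exact mem_insert.mpr (Or.inr (mem_erase.mpr ⟨hz2, hz1⟩))
    · have : i = j := hG.fringe_inj hj
      subst this
      exact mem_insert_self _ _
  · intro hz
    rcases mem_insert.mp hz with rfl | hz
    · exact ⟨hG.mid_mem i,
        (adj_base_iff hG (hG.fringe_mem i) (hG.mid_mem i)).mpr (Or.inr ⟨i, rfl, rfl⟩)⟩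
    · obtain ⟨hz1, hz2⟩ := mem_erase.mp hz
      exact ⟨base_subset_P hz2,
        (adj_base_iff hG (hG.fringe_mem i) (base_subset_P hz2)).mpr (Or.inl ⟨hz2, hz1⟩)⟩

private lemma friendsIn_P_nonfringe (hG : IsDomeGadget G 2 K P top mid fringe) {g : N}
    (hg : g ∈ domeBase P top mid) (hnf : ∀ i, g ≠ fringe i) :
    friendsIn G P g = (domeBase P top mid).erase g := by
  ext z
  rw [mem_friendsIn]
  constructor
  · rintro ⟨hz, ha⟩
    rcases (adj_base_iff hG hg hz).mp ha with ⟨hz1, hz2⟩ | ⟨j, hj, rfl⟩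
    · exact mem_erase.mpr ⟨hz2, hz1⟩
    · exact absurd hj (hnf j)
  · intro hz
    obtain ⟨hz1, hz2⟩ := mem_erase.mp hz
    exact ⟨base_subset_P hz2, (adj_base_iff hG hg (base_subset_P hz2)).mpr (Or.inl ⟨hz2, hz1⟩)⟩

/-! ### Cardinalities of the friend sets in `P` -/

private lemma cardF_P_top (hG : IsDomeGadget G 2 K P top mid fringe) :
    (friendsIn G P top).card = 2 := by
  rw [friendsIn_P_top hG, Finset.card_image_of_injective _ hG.mid_inj, Finset.card_univ,
    Fintype.card_fin]

private lemma cardF_P_mid (hG : IsDomeGadget G 2 K P top mid fringe) (i : Fin 2) :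
    (friendsIn G P (mid i)).card = 2 := by
  rw [friendsIn_P_mid hG i]
  rw [card_insert_of_notMem (by simp [(fringe_ne_top hG i).symm]), card_singleton]

private lemma cardF_P_fringe (hG : IsDomeGadget G 2 K P top mid fringe) (i : Fin 2) :
    (friendsIn G P (fringe i)).card = (domeBase P top mid).card := by
  rw [friendsIn_P_fringe hG i]
  rw [card_insert_of_notMem (fun h => mid_not_mem_base i (erase_subset _ _ h))]
  exact card_erase_add_one (hG.fringe_mem i)

private lemma cardF_P_nonfringe (hG : IsDomeGadget G 2 K P top mid fringe) {g : N}
    (hg : g ∈ domeBase P top mid) (hnf : ∀ i, g ≠ fringe i) :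
    (friendsIn G P g).card + 1 = (domeBase P top mid).card := by
  rw [friendsIn_P_nonfringe hG hg hnf]
  exact card_erase_add_one hg

/-! ### The sum of degrees over the base -/

private lemma filter_fringe_eq (hG : IsDomeGadget G 2 K P top mid fringe) :
    (domeBase P top mid).filter (fun g => ∃ i, g = fringe i) = {fringe 0, fringe 1} := by
  ext g
  rw [mem_filter]
  constructor
  · rintro ⟨_, i, rfl⟩
    fin_cases i
    · exact mem_insert_self _ _
    · exact mem_insert.mpr (Or.inr (mem_singleton_self _))
  · intro hg
    rcases mem_insert.mp hg with rfl | hg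
    · exact ⟨hG.fringe_mem 0, 0, rfl⟩
    · rw [mem_singleton] at hg
      subst hg
      exact ⟨hG.fringe_mem 1, 1, rfl⟩

private lemma sum_base_P (hG : IsDomeGadget G 2 K P top mid fringe) :
    ∑ g ∈ domeBase P top mid, ((friendsIn G P g).card : ℤ)
      = ((domeBase P top mid).card : ℤ) * ((domeBase P top mid).card - 1) + 2 := by
  set B := domeBase P top mid with hB
  have hpt : ∀ g ∈ B, ((friendsIn G P g).card : ℤ)
      = ((B.card : ℤ) - 1) + (if ∃ i, g = fringe i then 1 else 0) := by
    intro g hg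
    by_cases hf : ∃ i, g = fringe i
    · obtain ⟨i, rfl⟩ := hf
      rw [if_pos ⟨i, rfl⟩, cardF_P_fringe hG i]
      ring
    · push_neg at hf
      rw [if_neg (by push_neg; exact hf)]
      have := cardF_P_nonfringe hG hg hf
      have : ((friendsIn G P g).card : ℤ) + 1 = (B.card : ℤ) := by exact_mod_cast this
      linarith
  rw [Finset.sum_congr rfl hpt, Finset.sum_add_distrib, Finset.sum_const]
  have hsum2 : ∑ g ∈ B, (if ∃ i, g = fringe i then (1 : ℤ) else 0) = 2 := by
    rw [Finset.sum_boole, filter_fringe_eq hG]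
    have h01 : fringe 0 ≠ fringe 1 := fun h => absurd (hG.fringe_inj h) (by decide)
    rw [card_insert_of_notMem (by simp [h01]), card_singleton]
    norm_num
  rw [hsum2]
  push_cast
  ring

/-! ### Averaging sets and sums inside `P` -/

private lemma avgset_P_top (hG : IsDomeGadget G 2 K P top mid fringe) :
    insert top (friendsIn G P top) = {top, mid 0, mid 1} := by
  rw [friendsIn_P_top hG]
  have : (Finset.univ : Finset (Fin 2)).image mid = {mid 0, mid 1} := by
    ext z
    simp [Fin.exists_fin_two, eq_comm]
  rw [this]

private lemma sP_top (hG : IsDomeGadget G 2 K P top mid fringe) :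
    ((insert top (friendsIn G P top)).card : ℤ) = 3 := by
  rw [sCard_eq, cardF_P_top hG]
  norm_num

private lemma AP_top (hG : IsDomeGadget G 2 K P top mid fringe) :
    ∑ g ∈ insert top (friendsIn G P top), ((friendsIn G P g).card : ℤ) = 6 := by
  rw [avgset_P_top hG]
  have h01 : mid 0 ≠ mid 1 := fun h => absurd (hG.mid_inj h) (by decide)
  have ht0 : top ≠ mid 0 := fun h => (hG.mid_ne_top 0 h.symm)
  have ht1 : top ≠ mid 1 := fun h => (hG.mid_ne_top 1 h.symm)
  rw [show ({top, mid 0, mid 1} : Finset N) = insert top (insert (mid 0) {mid 1}) from rfl]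
  rw [Finset.sum_insert (by simp [ht0, ht1]), Finset.sum_insert (by simp [h01]),
    Finset.sum_singleton]
  rw [cardF_P_top hG, cardF_P_mid hG 0, cardF_P_mid hG 1]
  norm_num

private lemma avgset_P_mid (hG : IsDomeGadget G 2 K P top mid fringe) (i : Fin 2) :
    insert (mid i) (friendsIn G P (mid i)) = {mid i, top, fringe i} := by
  rw [friendsIn_P_mid hG i]

private lemma sP_mid (hG : IsDomeGadget G 2 K P top mid fringe) (i : Fin 2) :
    ((insert (mid i) (friendsIn G P (mid i))).card : ℤ) = 3 := by
  rw [sCard_eq, cardF_P_mid hG i]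
  norm_num

private lemma AP_mid (hG : IsDomeGadget G 2 K P top mid fringe) (i : Fin 2) :
    ∑ g ∈ insert (mid i) (friendsIn G P (mid i)), ((friendsIn G P g).card : ℤ)
      = ((domeBase P top mid).card : ℤ) + 4 := by
  rw [avgset_P_mid hG i]
  have h1 : mid i ≠ top := hG.mid_ne_top i
  have h2 : mid i ≠ fringe i := fun h => fringe_ne_mid hG i i h.symm
  have h3 : top ≠ fringe i := fun h => fringe_ne_top hG i h.symm
  rw [show ({mid i, top, fringe i} : Finset N) = insert (mid i) (insert top {fringe i}) from rfl]
  rw [Finset.sum_insert (by simp [h1, h2]), Finset.sum_insert (by simp [h3]),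
    Finset.sum_singleton]
  rw [cardF_P_mid hG i, cardF_P_top hG, cardF_P_fringe hG i]
  push_cast
  ring

private lemma avgset_P_nonfringe (hG : IsDomeGadget G 2 K P top mid fringe) {g : N}
    (hg : g ∈ domeBase P top mid) (hnf : ∀ i, g ≠ fringe i) :
    insert g (friendsIn G P g) = domeBase P top mid := by
  rw [friendsIn_P_nonfringe hG hg hnf, insert_erase hg]

private lemma avgset_P_fringe (hG : IsDomeGadget G 2 K P top mid fringe) (i : Fin 2) :
    insert (fringe i) (friendsIn G P (fringe i))
      = insert (mid i) (domeBase P top mid) := by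
  rw [friendsIn_P_fringe hG i, Finset.insert_comm, insert_erase (hG.fringe_mem i)]

private lemma sP_fringe (hG : IsDomeGadget G 2 K P top mid fringe) (i : Fin 2) :
    ((insert (fringe i) (friendsIn G P (fringe i))).card : ℤ)
      = ((domeBase P top mid).card : ℤ) + 1 := by
  rw [avgset_P_fringe hG i, card_insert_of_notMem (mid_not_mem_base i)]
  push_cast
  ring

private lemma AP_fringe (hG : IsDomeGadget G 2 K P top mid fringe) (i : Fin 2) :
    ∑ g ∈ insert (fringe i) (friendsIn G P (fringe i)), ((friendsIn G P g).card : ℤ)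
      = ((domeBase P top mid).card : ℤ) * ((domeBase P top mid).card - 1) + 4 := by
  rw [avgset_P_fringe hG i, Finset.sum_insert (mid_not_mem_base i), sum_base_P hG,
    cardF_P_mid hG i]
  push_cast
  ring

/-! ### Neighborhoods in an arbitrary coalition `C` -/

private lemma nbr_base (hG : IsDomeGadget G 2 K P top mid fringe)
    (hcl : ∀ g ∈ P, g ≠ top → ∀ z, G.Adj g z → z ∈ P)
    {g z : N} (hg : g ∈ domeBase P top mid) (hadj : G.Adj g z) :
    (z ∈ domeBase P top mid ∧ z ≠ g) ∨ ∃ i, g = fringe i ∧ z = mid i := by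
  have hzP : z ∈ P := hcl g (base_subset_P hg) (fun h => top_not_mem_base (h ▸ hg)) z hadj
  exact (adj_base_iff hG hg hzP).mp hadj

private lemma nbr_mid (hG : IsDomeGadget G 2 K P top mid fringe)
    (hcl : ∀ g ∈ P, g ≠ top → ∀ z, G.Adj g z → z ∈ P)
    {i : Fin 2} {z : N} (hadj : G.Adj (mid i) z) : z = top ∨ z = fringe i := by
  have hzP : z ∈ P := hcl (mid i) (hG.mid_mem i) (hG.mid_ne_top i) z hadj
  exact (adj_mid_iff hG hzP).mp hadj

private lemma fC_mid_le (hG : IsDomeGadget G 2 K P top mid fringe)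
    (hcl : ∀ g ∈ P, g ≠ top → ∀ z, G.Adj g z → z ∈ P) (C : Finset N) (i : Fin 2) :
    (friendsIn G C (mid i)).card ≤ 2 := by
  have hsub : friendsIn G C (mid i) ⊆ {top, fringe i} := by
    intro z hz
    obtain ⟨_, hadj⟩ := mem_friendsIn.mp hz
    rcases nbr_mid hG hcl hadj with rfl | rfl
    · exact mem_insert_self _ _
    · exact mem_insert.mpr (Or.inr (mem_singleton_self _))
  exact (card_le_card hsub).trans ((card_insert_le _ _).trans (by simp))

private lemma fC_base_le (hG : IsDomeGadget G 2 K P top mid fringe)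
    (hcl : ∀ g ∈ P, g ≠ top → ∀ z, G.Adj g z → z ∈ P)
    {C : Finset N} {g : N} (hgC : g ∈ C) (hg : g ∈ domeBase P top mid) :
    (friendsIn G C g).card ≤ (C ∩ domeBase P top mid).card := by
  by_cases hf : ∃ i, g = fringe i
  · obtain ⟨i, rfl⟩ := hf
    have hsub : friendsIn G C (fringe i)
        ⊆ insert (mid i) ((C ∩ domeBase P top mid).erase (fringe i)) := by
      intro z hz
      obtain ⟨hzC, hadj⟩ := mem_friendsIn.mp hz
      rcases nbr_base hG hcl hg hadj with ⟨h1, h2⟩ | ⟨j, hj, rfl⟩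
      · exact mem_insert.mpr (Or.inr (mem_erase.mpr ⟨h2, mem_inter.mpr ⟨hzC, h1⟩⟩))
      · have : i = j := hG.fringe_inj hj
        subst this
        exact mem_insert_self _ _
    have h1 := (card_le_card hsub).trans (card_insert_le _ _)
    have h2 : ((C ∩ domeBase P top mid).erase (fringe i)).card + 1
        = (C ∩ domeBase P top mid).card :=
      card_erase_add_one (mem_inter.mpr ⟨hgC, hg⟩)
    omega
  · push_neg at hf
    have hsub : friendsIn G C g ⊆ (C ∩ domeBase P top mid).erase g := by
      intro z hz
      obtain ⟨hzC, hadj⟩ := mem_friendsIn.mp hz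
      rcases nbr_base hG hcl hg hadj with ⟨h1, h2⟩ | ⟨j, hj, rfl⟩
      · exact mem_erase.mpr ⟨h2, mem_inter.mpr ⟨hzC, h1⟩⟩
      · exact absurd hj (hf j)
    exact (card_le_card hsub).trans (card_le_card (erase_subset _ _))

private lemma avgC_base_mem (hG : IsDomeGadget G 2 K P top mid fringe)
    (hcl : ∀ g ∈ P, g ≠ top → ∀ z, G.Adj g z → z ∈ P)
    {C : Finset N} {c : N} (hcC : c ∈ C) (hc : c ∈ domeBase P top mid) :
    ∀ g ∈ insert c (friendsIn G C c),
      g ∈ C ∧ (g ∈ domeBase P top mid ∨ ∃ i, g = mid i) := by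
  intro g hg
  rcases mem_insert.mp hg with rfl | hg
  · exact ⟨hcC, Or.inl hc⟩
  · obtain ⟨hgC, hadj⟩ := mem_friendsIn.mp hg
    rcases nbr_base hG hcl hc hadj with ⟨h1, _⟩ | ⟨i, _, rfl⟩
    · exact ⟨hgC, Or.inl h1⟩
    · exact ⟨hgC, Or.inr ⟨i, rfl⟩⟩

/-! ### A pure integer cancellation helper -/

private lemma cancel₂ {n sC sP AP AC E Kz Cc : ℤ} (hnpos : 0 < n + 1) (hsCpos : 0 < sC)
    (hineq : (n + 1) * (AP * sC - AC * sP) < sC * sP * (Kz - Cc))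
    (hACle : AC * sP ≤ (AP - E) * sC) :
    (n + 1) * E < sP * (Kz - Cc) := by
  have e2 : sC * ((n + 1) * E) ≤ (n + 1) * (AP * sC - AC * sP) := by
    nlinarith [mul_nonneg (le_of_lt hnpos) (sub_nonneg.mpr hACle)]
  have h5 : sC * ((n + 1) * E) < sC * (sP * (Kz - Cc)) :=
    lt_of_le_of_lt e2 (lt_of_lt_of_le hineq (le_of_eq (by ring)))
  exact (mul_lt_mul_iff_right₀ hsCpos).mp h5

/-! ### Claim 1: no base player of a `(2,k')`-gadget lies in a blocking coalition -/

private lemma claim1 (hG : IsDomeGadget G 2 K P top mid fringe)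
    (hcl : ∀ g ∈ P, g ≠ top → ∀ z, G.Adj g z → z ∈ P)
    {Γ : CoalitionStructure N} {C : Finset N}
    (hΓP : ∀ i ∈ P, Γ.part i = P)
    (hblock : Blocks (utilAvgEQ G) Γ C)
    {w : N} (hwC : w ∈ C) (hw1 : w ∉ domeBase P top mid) (hw2 : ∀ i, w ≠ mid i)
    (hK : 23 ≤ K)
    (hn2 : 2 * K ^ 2 ≤ 3 * Fintype.card N) :
    ∀ z ∈ domeBase P top mid, z ∉ C := by
  have hbK : (domeBase P top mid).card + 3 = K := base_card hG
  have hbZ : ((domeBase P top mid).card : ℤ) + 3 = (K : ℤ) := by exact_mod_cast hbK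
  have hKZ : (23 : ℤ) ≤ (K : ℤ) := by exact_mod_cast hK
  have hn2Z : 2 * (K : ℤ) ^ 2 ≤ 3 * (Fintype.card N : ℤ) := by exact_mod_cast hn2
  have hb20 : (20 : ℤ) ≤ ((domeBase P top mid).card : ℤ) := by omega
  have hC1 : (1 : ℤ) ≤ (C.card : ℤ) := by
    have : 0 < C.card := card_pos.mpr ⟨w, hwC⟩
    exact_mod_cast this
  have hnpos : (0 : ℤ) < (Fintype.card N : ℤ) + 1 := by nlinarith
  have hPK : ((P.card : ℤ)) = (K : ℤ) := by exact_mod_cast hG.card_eq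
  -- key₁ : a non-fringe base player cannot be in C
  have key₁ : ∀ c, c ∈ C → c ∈ domeBase P top mid → (∀ i, c ≠ fringe i) → False := by
    intro c hcC hcB hnf
    have hineq := blocks_ineq hblock hcC (hΓP c (base_subset_P hcB))
    rw [avgset_P_nonfringe hG hcB hnf, sum_base_P hG, hPK] at hineq
    have hsCpos : (0 : ℤ) < ((insert c (friendsIn G C c)).card : ℤ) := by
      have : 0 < (insert c (friendsIn G C c)).card := card_pos.mpr (insert_nonempty _ _)
      exact_mod_cast this
    -- Stage 1: the full base is contained in C
    have hfull : domeBase P top mid ⊆ C := by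
      by_contra hnot
      have hne : C ∩ domeBase P top mid ≠ domeBase P top mid := by
        intro h
        exact hnot (fun z hz => (mem_inter.mp (h ▸ hz)).1)
      have htlt : (C ∩ domeBase P top mid).card < (domeBase P top mid).card := by
        rcases lt_or_eq_of_le
            (card_le_card (inter_subset_right : C ∩ domeBase P top mid ⊆ _)) with h | h
        · exact h
        · exact absurd (eq_of_subset_of_card_le inter_subset_right (le_of_eq h.symm)) hne
      have ht : ((C ∩ domeBase P top mid).card : ℤ) ≤ ((domeBase P top mid).card : ℤ) - 1 := by
        have : (((C ∩ domeBase P top mid).card : ℤ)) < ((domeBase P top mid).card : ℤ) := by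
          exact_mod_cast htlt
        omega
      have hptw : ∀ g ∈ insert c (friendsIn G C c),
          ((friendsIn G C g).card : ℤ) ≤ ((domeBase P top mid).card : ℤ) - 1 := by
        intro g hg
        obtain ⟨hgC, hgB | ⟨i, rfl⟩⟩ := avgC_base_mem hG hcl hcC hcB g hg
        · have h5 := fC_base_le hG hcl hgC hgB
          have : ((friendsIn G C g).card : ℤ) ≤ ((C ∩ domeBase P top mid).card : ℤ) := by
            exact_mod_cast h5
          omega
        · have h5 := fC_mid_le hG hcl C i
          have : ((friendsIn G C (mid i)).card : ℤ) ≤ 2 := by exact_mod_cast h5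
          omega
      have hACle : (∑ g ∈ insert c (friendsIn G C c), ((friendsIn G C g).card : ℤ))
          ≤ ((insert c (friendsIn G C c)).card : ℤ) * (((domeBase P top mid).card : ℤ) - 1) := by
        have := Finset.sum_le_card_nsmul _ _ _ hptw
        rw [nsmul_eq_mul] at this
        exact this
      have hmul : (∑ g ∈ insert c (friendsIn G C c), ((friendsIn G C g).card : ℤ))
            * ((domeBase P top mid).card : ℤ)
          ≤ ((((domeBase P top mid).card : ℤ) * (((domeBase P top mid).card : ℤ) - 1) + 2) - 2)
            * ((insert c (friendsIn G C c)).card : ℤ) := by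
        nlinarith [mul_le_mul_of_nonneg_right hACle
          (by omega : (0:ℤ) ≤ ((domeBase P top mid).card : ℤ))]
      have h4 := cancel₂ hnpos hsCpos hineq hmul
      nlinarith
    -- Stage 2: with the full base in C we reach a contradiction
    have hfr : friendsIn G C c = (domeBase P top mid).erase c := by
      ext z
      rw [mem_friendsIn]
      constructor
      · rintro ⟨hzC, hadj⟩
        rcases nbr_base hG hcl hcB hadj with ⟨h1, h2⟩ | ⟨j, hj, rfl⟩
        · exact mem_erase.mpr ⟨h2, h1⟩
        · exact absurd hj (hnf j)
      · intro hz
        obtain ⟨hz1, hz2⟩ := mem_erase.mp hz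
        exact ⟨hfull hz2, (adj_base_iff hG hcB (base_subset_P hz2)).mpr (Or.inl ⟨hz2, hz1⟩)⟩
    have hSC : insert c (friendsIn G C c) = domeBase P top mid := by
      rw [hfr, insert_erase hcB]
    rw [hSC] at hineq
    have hfringe01 : fringe 0 ≠ fringe 1 := fun h => absurd (hG.fringe_inj h) (by decide)
    -- pointwise bound on base degrees in C
    have hptw : ∀ g ∈ domeBase P top mid, ((friendsIn G C g).card : ℤ)
        ≤ (((domeBase P top mid).card : ℤ) - 1)
            + (if g = fringe 0 ∧ mid 0 ∈ C then 1 else 0)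
            + (if g = fringe 1 ∧ mid 1 ∈ C then 1 else 0) := by
      intro g hg
      by_cases hf : ∃ i, g = fringe i
      · obtain ⟨i, rfl⟩ := hf
        by_cases hm : mid i ∈ C
        · have hsub : friendsIn G C (fringe i)
              ⊆ insert (mid i) ((domeBase P top mid).erase (fringe i)) := by
            intro z hz
            obtain ⟨hzC, hadj⟩ := mem_friendsIn.mp hz
            rcases nbr_base hG hcl hg hadj with ⟨h1, h2⟩ | ⟨j, hj, rfl⟩
            · exact mem_insert.mpr (Or.inr (mem_erase.mpr ⟨h2, h1⟩))
            · have : i = j := hG.fringe_inj hj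
              subst this
              exact mem_insert_self _ _
          have h1 := (card_le_card hsub).trans (card_insert_le _ _)
          have h2 : ((domeBase P top mid).erase (fringe i)).card + 1
              = (domeBase P top mid).card := card_erase_add_one hg
          have h3 : ((friendsIn G C (fringe i)).card : ℤ)
              ≤ ((domeBase P top mid).card : ℤ) := by
            have : (friendsIn G C (fringe i)).card ≤ (domeBase P top mid).card := by omega
            exact_mod_cast this
          have hi : i = 0 ∨ i = 1 := by
            rcases i with ⟨iv, hiv⟩
            interval_cases iv
            · exact Or.inl rfl
            · exact Or.inr rfl
          rcases hi with rfl | rfl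
          · rw [if_pos ⟨rfl, hm⟩,
              if_neg (fun h => hfringe01 h.1 : ¬ (fringe 0 = fringe 1 ∧ mid 1 ∈ C))]
            omega
          · rw [if_neg (fun h => hfringe01 h.1.symm : ¬ (fringe 1 = fringe 0 ∧ mid 0 ∈ C)),
              if_pos ⟨rfl, hm⟩]
            omega
        · have hsub : friendsIn G C (fringe i) ⊆ (domeBase P top mid).erase (fringe i) := by
            intro z hz
            obtain ⟨hzC, hadj⟩ := mem_friendsIn.mp hz
            rcases nbr_base hG hcl hg hadj with ⟨h1, h2⟩ | ⟨j, hj, rfl⟩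
            · exact mem_erase.mpr ⟨h2, h1⟩
            · have : i = j := hG.fringe_inj hj
              subst this
              exact absurd hzC hm
          have h1 := card_le_card hsub
          have h2 : ((domeBase P top mid).erase (fringe i)).card + 1
              = (domeBase P top mid).card := card_erase_add_one hg
          have h3 : ((friendsIn G C (fringe i)).card : ℤ)
              ≤ ((domeBase P top mid).card : ℤ) - 1 := by
            have h5 : (friendsIn G C (fringe i)).card + 1 ≤ (domeBase P top mid).card := by
              omega
            have h6 : ((friendsIn G C (fringe i)).card : ℤ) + 1
                ≤ ((domeBase P top mid).card : ℤ) := by exact_mod_cast h5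
            omega
          have hpos1 : (0:ℤ) ≤ (if fringe i = fringe 0 ∧ mid 0 ∈ C then (1:ℤ) else 0) := by
            split <;> norm_num
          have hpos2 : (0:ℤ) ≤ (if fringe i = fringe 1 ∧ mid 1 ∈ C then (1:ℤ) else 0) := by
            split <;> norm_num
          omega
      · push_neg at hf
        have hsub : friendsIn G C g ⊆ (domeBase P top mid).erase g := by
          intro z hz
          obtain ⟨hzC, hadj⟩ := mem_friendsIn.mp hz
          rcases nbr_base hG hcl hg hadj with ⟨h1, h2⟩ | ⟨j, hj, rfl⟩
          · exact mem_erase.mpr ⟨h2, h1⟩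
          · exact absurd hj (hf j)
        have h1 := card_le_card hsub
        have h2 : ((domeBase P top mid).erase g).card + 1 = (domeBase P top mid).card :=
          card_erase_add_one hg
        have h3 : ((friendsIn G C g).card : ℤ) ≤ ((domeBase P top mid).card : ℤ) - 1 := by
          have h5 : (friendsIn G C g).card + 1 ≤ (domeBase P top mid).card := by omega
          have h6 : ((friendsIn G C g).card : ℤ) + 1 ≤ ((domeBase P top mid).card : ℤ) := by
            exact_mod_cast h5
          omega
        have hpos1 : (0:ℤ) ≤ (if g = fringe 0 ∧ mid 0 ∈ C then (1:ℤ) else 0) := by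
          split <;> norm_num
        have hpos2 : (0:ℤ) ≤ (if g = fringe 1 ∧ mid 1 ∈ C then (1:ℤ) else 0) := by
          split <;> norm_num
        omega
    have hACsum : (∑ g ∈ domeBase P top mid, ((friendsIn G C g).card : ℤ))
        ≤ ((domeBase P top mid).card : ℤ) * (((domeBase P top mid).card : ℤ) - 1)
          + (if mid 0 ∈ C then 1 else 0) + (if mid 1 ∈ C then 1 else 0) := by
      have h0 : ∑ g ∈ domeBase P top mid, (if g = fringe 0 ∧ mid 0 ∈ C then (1:ℤ) else 0)
          = if mid 0 ∈ C then 1 else 0 := by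
        by_cases hm : mid 0 ∈ C
        · simp only [hm, and_true, if_pos]
          rw [Finset.sum_ite_eq' (domeBase P top mid) (fringe 0) (fun _ => (1:ℤ)),
            if_pos (hG.fringe_mem 0)]
        · simp [hm]
      have h1 : ∑ g ∈ domeBase P top mid, (if g = fringe 1 ∧ mid 1 ∈ C then (1:ℤ) else 0)
          = if mid 1 ∈ C then 1 else 0 := by
        by_cases hm : mid 1 ∈ C
        · simp only [hm, and_true, if_pos]
          rw [Finset.sum_ite_eq' (domeBase P top mid) (fringe 1) (fun _ => (1:ℤ)),
            if_pos (hG.fringe_mem 1)]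
        · simp [hm]
      calc (∑ g ∈ domeBase P top mid, ((friendsIn G C g).card : ℤ))
          ≤ ∑ g ∈ domeBase P top mid, ((((domeBase P top mid).card : ℤ) - 1)
              + (if g = fringe 0 ∧ mid 0 ∈ C then 1 else 0)
              + (if g = fringe 1 ∧ mid 1 ∈ C then 1 else 0)) := Finset.sum_le_sum hptw
        _ = ((domeBase P top mid).card : ℤ) * (((domeBase P top mid).card : ℤ) - 1)
              + (if mid 0 ∈ C then 1 else 0) + (if mid 1 ∈ C then 1 else 0) := by
            rw [Finset.sum_add_distrib, Finset.sum_add_distrib, Finset.sum_const,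
              nsmul_eq_mul, h0, h1]
    have hsBpos : (0 : ℤ) < ((domeBase P top mid).card : ℤ) := by omega
    by_cases hm01 : mid 0 ∈ C ∧ mid 1 ∈ C
    · -- both mids in C : C has at least K members
      have hsub : insert w (insert (mid 0) (insert (mid 1) (domeBase P top mid))) ⊆ C := by
        intro z hz
        rcases mem_insert.mp hz with rfl | hz
        · exact hwC
        rcases mem_insert.mp hz with rfl | hz
        · exact hm01.1
        rcases mem_insert.mp hz with rfl | hz
        · exact hm01.2
        · exact hfull hz
      have hcard : (insert w (insert (mid 0) (insert (mid 1) (domeBase P top mid)))).card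
          = K := by
        have hmid01 : mid 0 ≠ mid 1 := fun h => absurd (hG.mid_inj h) (by decide)
        rw [card_insert_of_notMem, card_insert_of_notMem,
          card_insert_of_notMem (mid_not_mem_base 1)]
        · omega
        · simp only [mem_insert]
          push_neg
          exact ⟨hmid01, mid_not_mem_base 0⟩
        · simp only [mem_insert]
          push_neg
          exact ⟨hw2 0, hw2 1, hw1⟩
      have hCK : (K : ℤ) ≤ (C.card : ℤ) := by
        have := card_le_card hsub
        rw [hcard] at this
        exact_mod_cast this
      have hACle : (∑ g ∈ domeBase P top mid, ((friendsIn G C g).card : ℤ))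
            * ((domeBase P top mid).card : ℤ)
          ≤ ((((domeBase P top mid).card : ℤ) * (((domeBase P top mid).card : ℤ) - 1) + 2) - 0)
            * ((domeBase P top mid).card : ℤ) := by
        rw [if_pos hm01.1, if_pos hm01.2] at hACsum
        nlinarith
      have h4 := cancel₂ hnpos hsBpos hineq hACle
      nlinarith
    · -- at most one mid in C
      have hACle : (∑ g ∈ domeBase P top mid, ((friendsIn G C g).card : ℤ))
            * ((domeBase P top mid).card : ℤ)
          ≤ ((((domeBase P top mid).card : ℤ) * (((domeBase P top mid).card : ℤ) - 1) + 2) - 1)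
            * ((domeBase P top mid).card : ℤ) := by
        have hsum1 : (∑ g ∈ domeBase P top mid, ((friendsIn G C g).card : ℤ))
            ≤ ((domeBase P top mid).card : ℤ) * (((domeBase P top mid).card : ℤ) - 1) + 1 := by
          rcases not_and_or.mp hm01 with hm | hm
          · rw [if_neg hm] at hACsum
            have : (if mid 1 ∈ C then (1:ℤ) else 0) ≤ 1 := by split <;> norm_num
            omega
          · rw [if_neg hm] at hACsum
            have : (if mid 0 ∈ C then (1:ℤ) else 0) ≤ 1 := by split <;> norm_num
            omega
        nlinarith
      have hsub : insert w (domeBase P top mid) ⊆ C := by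
        intro z hz
        rcases mem_insert.mp hz with rfl | hz
        · exact hwC
        · exact hfull hz
      have hCb : ((domeBase P top mid).card : ℤ) + 1 ≤ (C.card : ℤ) := by
        have := card_le_card hsub
        rw [card_insert_of_notMem hw1] at this
        exact_mod_cast this
      have h4 := cancel₂ hnpos hsBpos hineq hACle
      nlinarith
  -- key₂ : a fringe player cannot be in C either
  have key₂ : ∀ i : Fin 2, fringe i ∈ C → False := by
    intro i hziC
    have hineq := blocks_ineq hblock hziC (hΓP (fringe i) (base_subset_P (hG.fringe_mem i)))
    rw [AP_fringe hG i, sP_fringe hG i, hPK] at hineq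
    have hsCpos : (0 : ℤ) < ((insert (fringe i) (friendsIn G C (fringe i))).card : ℤ) := by
      have : 0 < (insert (fringe i) (friendsIn G C (fringe i))).card :=
        card_pos.mpr (insert_nonempty _ _)
      exact_mod_cast this
    -- at least 3 base players of this gadget are in C
    have ht3 : 3 ≤ (C ∩ domeBase P top mid).card := by
      by_contra hlt
      push_neg at hlt
      have ht : ((C ∩ domeBase P top mid).card : ℤ) ≤ 2 := by
        exact_mod_cast Nat.lt_succ_iff.mp hlt
      have hptw : ∀ g ∈ insert (fringe i) (friendsIn G C (fringe i)),
          ((friendsIn G C g).card : ℤ) ≤ 2 := by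
        intro g hg
        obtain ⟨hgC, hgB | ⟨j, rfl⟩⟩ :=
          avgC_base_mem hG hcl hziC (hG.fringe_mem i) g hg
        · have h5 := fC_base_le hG hcl hgC hgB
          have : ((friendsIn G C g).card : ℤ) ≤ ((C ∩ domeBase P top mid).card : ℤ) := by
            exact_mod_cast h5
          omega
        · have h5 := fC_mid_le hG hcl C j
          exact_mod_cast h5
      have hACle : (∑ g ∈ insert (fringe i) (friendsIn G C (fringe i)),
            ((friendsIn G C g).card : ℤ))
          ≤ ((insert (fringe i) (friendsIn G C (fringe i))).card : ℤ) * 2 := by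
        have := Finset.sum_le_card_nsmul _ _ _ hptw
        rw [nsmul_eq_mul] at this
        exact this
      have hmul : (∑ g ∈ insert (fringe i) (friendsIn G C (fringe i)),
            ((friendsIn G C g).card : ℤ)) * (((domeBase P top mid).card : ℤ) + 1)
          ≤ ((((domeBase P top mid).card : ℤ) * (((domeBase P top mid).card : ℤ) - 1) + 4)
              - (((domeBase P top mid).card : ℤ) * ((domeBase P top mid).card : ℤ)
                - 3 * ((domeBase P top mid).card : ℤ) + 2))
            * ((insert (fringe i) (friendsIn G C (fringe i))).card : ℤ) := by
        nlinarith [mul_le_mul_of_nonneg_right hACle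
          (by omega : (0:ℤ) ≤ ((domeBase P top mid).card : ℤ) + 1)]
      have h4 := cancel₂ hnpos hsCpos hineq hmul
      have hf1 : (K : ℤ) ≤ ((domeBase P top mid).card : ℤ) * ((domeBase P top mid).card : ℤ)
          - 3 * ((domeBase P top mid).card : ℤ) + 2 := by nlinarith
      have hf2 : (K : ℤ) ≤ (Fintype.card N : ℤ) + 1 := by nlinarith
      have hL : (K : ℤ) * (K : ℤ)
          ≤ ((Fintype.card N : ℤ) + 1) * (((domeBase P top mid).card : ℤ)
              * ((domeBase P top mid).card : ℤ) - 3 * ((domeBase P top mid).card : ℤ) + 2) :=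
        mul_le_mul hf2 hf1 (by omega) (by linarith)
      have hR : (((domeBase P top mid).card : ℤ) + 1) * ((K : ℤ) - (C.card : ℤ))
          ≤ (((domeBase P top mid).card : ℤ) + 1) * ((K : ℤ) - 1) :=
        mul_le_mul_of_nonneg_left (by linarith) (by linarith)
      nlinarith [hL, h4, hR]
    -- hence some non-fringe base player is in C
    have hnotsub : ¬ (C ∩ domeBase P top mid ⊆ {fringe 0, fringe 1}) := by
      intro hsub
      have := card_le_card hsub
      have hle2 : ({fringe 0, fringe 1} : Finset N).card ≤ 2 :=
        (card_insert_le _ _).trans (by simp)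
      omega
    obtain ⟨c, hc, hcnot⟩ := Finset.not_subset.mp hnotsub
    obtain ⟨hcC, hcB⟩ := mem_inter.mp hc
    apply key₁ c hcC hcB
    intro j hj
    apply hcnot
    fin_cases j
    · exact hj ▸ mem_insert_self _ _
    · exact hj ▸ mem_insert.mpr (Or.inr (mem_singleton_self _))
  intro z hzB hzC
  by_cases hf : ∃ i, z = fringe i
  · obtain ⟨i, rfl⟩ := hf
    exact key₂ i hzC
  · push_neg at hf
    exact key₁ z hzC hzB hf

/-! ### No mid player of a `(2,k')`-gadget lies in a blocking coalition -/

private lemma no_mid_in_C (hG : IsDomeGadget G 2 K P top mid fringe)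
    (hcl : ∀ g ∈ P, g ≠ top → ∀ z, G.Adj g z → z ∈ P)
    {Γ : CoalitionStructure N} {C : Finset N}
    (hΓP : ∀ i ∈ P, Γ.part i = P)
    (hblock : Blocks (utilAvgEQ G) Γ C)
    (hbase : ∀ z ∈ domeBase P top mid, z ∉ C)
    (htop4 : (friendsIn G C top).card ≤ 4)
    (hK : 23 ≤ K)
    (hn2 : 2 * K ^ 2 ≤ 3 * Fintype.card N)
    {i : Fin 2} (hmi : mid i ∈ C) : False := by
  have hbK : (domeBase P top mid).card + 3 = K := base_card hG
  have hbZ : ((domeBase P top mid).card : ℤ) + 3 = (K : ℤ) := by exact_mod_cast hbK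
  have hKZ : (23 : ℤ) ≤ (K : ℤ) := by exact_mod_cast hK
  have hn2Z : 2 * (K : ℤ) ^ 2 ≤ 3 * (Fintype.card N : ℤ) := by exact_mod_cast hn2
  have hC1 : (1 : ℤ) ≤ (C.card : ℤ) := by
    have : 0 < C.card := card_pos.mpr ⟨mid i, hmi⟩
    exact_mod_cast this
  have hnpos : (0 : ℤ) < (Fintype.card N : ℤ) + 1 := by nlinarith
  have hPK : ((P.card : ℤ)) = (K : ℤ) := by exact_mod_cast hG.card_eq
  have hKn : (K : ℤ) ≤ (Fintype.card N : ℤ) + 1 := by nlinarith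
  have hineq := blocks_ineq hblock hmi (hΓP (mid i) (hG.mid_mem i))
  rw [AP_mid hG i, sP_mid hG i, hPK] at hineq
  by_cases htop : top ∈ C
  · have hfr : friendsIn G C (mid i) = {top} := by
      ext z
      rw [mem_friendsIn, mem_singleton]
      constructor
      · rintro ⟨hzC, hadj⟩
        rcases nbr_mid hG hcl hadj with rfl | rfl
        · rfl
        · exact absurd hzC (hbase _ (hG.fringe_mem i))
      · rintro rfl
        exact ⟨htop, (adj_mid_iff hG hG.top_mem).mpr (Or.inl rfl)⟩
    have hne : mid i ≠ top := hG.mid_ne_top i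
    have hSC : insert (mid i) (friendsIn G C (mid i)) = insert (mid i) {top} := by rw [hfr]
    rw [hSC] at hineq
    have hs2 : ((insert (mid i) ({top} : Finset N)).card : ℤ) = 2 := by
      rw [card_insert_of_notMem (by simp [hne]), card_singleton]
      norm_num
    have hsum : (∑ g ∈ insert (mid i) ({top} : Finset N), ((friendsIn G C g).card : ℤ))
        = ((friendsIn G C (mid i)).card : ℤ) + ((friendsIn G C top).card : ℤ) := by
      rw [Finset.sum_insert (by simp [hne]), Finset.sum_singleton]
    rw [hs2, hsum] at hineq
    have hf1 : ((friendsIn G C (mid i)).card : ℤ) = 1 := by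
      rw [hfr, card_singleton]
      norm_num
    have hf4 : ((friendsIn G C top).card : ℤ) ≤ 4 := by exact_mod_cast htop4
    rw [hf1] at hineq
    -- hineq : (n+1)*((b+4)*2 - (1 + ftop)*2↑... ) < 2*2*(K - Ccard)
    have hL : (K : ℤ) * (K : ℤ)
        ≤ ((Fintype.card N : ℤ) + 1) * ((((domeBase P top mid).card : ℤ) + 4) * 2
            - (1 + ((friendsIn G C top).card : ℤ)) * 2) := by
      have h1 : (K : ℤ) ≤ (((domeBase P top mid).card : ℤ) + 4) * 2
          - (1 + ((friendsIn G C top).card : ℤ)) * 2 := by linarith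
      nlinarith [mul_le_mul hKn h1 (by linarith) (by linarith)]
    have hR : (2 : ℤ) * 2 * ((K : ℤ) - (C.card : ℤ)) ≤ 4 * ((K : ℤ) - 1) := by linarith
    nlinarith [hL, hineq, hR]
  · have hfr : friendsIn G C (mid i) = ∅ := by
      rw [eq_empty_iff_forall_notMem]
      intro z hz
      obtain ⟨hzC, hadj⟩ := mem_friendsIn.mp hz
      rcases nbr_mid hG hcl hadj with rfl | rfl
      · exact htop hzC
      · exact hbase _ (hG.fringe_mem i) hzC
    have hSC : insert (mid i) (friendsIn G C (mid i)) = {mid i} := by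
      rw [hfr]
      rfl
    rw [hSC] at hineq
    have hs1 : (({mid i} : Finset N).card : ℤ) = 1 := by
      rw [card_singleton]
      norm_num
    have hsum : (∑ g ∈ ({mid i} : Finset N), ((friendsIn G C g).card : ℤ))
        = ((friendsIn G C (mid i)).card : ℤ) := Finset.sum_singleton _ _
    rw [hs1, hsum, hfr] at hineq
    simp only [card_empty] at hineq
    push_cast at hineq
    have hL : (K : ℤ) * 4 ≤ ((Fintype.card N : ℤ) + 1) * (((domeBase P top mid).card : ℤ) + 4) :=
      mul_le_mul hKn (by linarith) (by norm_num) (by linarith)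
    nlinarith [hineq, hL]

end Gadget

/-! ### Arithmetic facts about `avgK'` -/

private lemma avgK'_facts {k : ℕ} (hk : 4 ≤ k) :
    23 ≤ avgK' k ∧ k ^ 2 ≤ avgK' k ∧ 2 * avgK' k ≤ 3 * k ^ 2 := by
  obtain ⟨m, rfl⟩ : ∃ m, k = m + 4 := ⟨k - 4, by omega⟩
  have h2c : Nat.choose (m + 4) 2 * 2 = (m + 4) * (m + 3) := by
    rw [Nat.choose_two_right]
    have h34 : m + 4 - 1 = m + 3 := rfl
    rw [h34, mul_comm (m + 4) (m + 3),
      Nat.div_mul_cancel (Even.two_dvd (Nat.even_mul_succ_self (m + 3)))]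
  unfold avgK'
  refine ⟨?_, ?_, ?_⟩ <;> nlinarith [h2c, sq_nonneg m, Nat.zero_le m]

/-! ### Reduction-level lemmas -/

section Reduction

variable {V : Type*} [Fintype V] [DecidableEq V] {H : SimpleGraph V} {k : ℕ}
  {G : SimpleGraph N} {Pv : V → Finset N} {Pe : Sym2 V → Finset N}
  {Pve : V → Sym2 V → Finset N} {vp : V → N} {ep : Sym2 V → N} {bp : V → Sym2 V → N}

private lemma vp_mem (R : AvgEQReduction H k G Pv Pe Pve vp ep bp) (v : V) :
    vp v ∈ Pv v := by
  obtain ⟨m, f, hD⟩ := R.dome_v v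
  exact hD.top_mem

private lemma ep_mem (R : AvgEQReduction H k G Pv Pe Pve vp ep bp) {e : Sym2 V}
    (he : e ∈ H.edgeSet) : ep e ∈ Pe e := by
  obtain ⟨m, f, hD⟩ := R.dome_e e he
  exact hD.top_mem

private lemma bp_mem (R : AvgEQReduction H k G Pv Pe Pve vp ep bp) {v : V} {e : Sym2 V}
    (he : e ∈ H.edgeSet) (hv : v ∈ e) : bp v e ∈ Pve v e := by
  obtain ⟨m, f, hD⟩ := R.dome_ve v e he hv
  exact hD.top_mem

private lemma closed_Pe (R : AvgEQReduction H k G Pv Pe Pve vp ep bp) {e : Sym2 V}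
    (he : e ∈ H.edgeSet) :
    ∀ g ∈ Pe e, g ≠ ep e → ∀ z, G.Adj g z → z ∈ Pe e := by
  intro g hg hne z hadj
  rcases R.adj_cases g z hadj with ⟨v, h1, h2⟩ | ⟨f, hf, h1, h2⟩ | ⟨v, f, hf, hvf, h1, h2⟩
    | ⟨v, f, hf, hvf, hc⟩ | ⟨v, f, hf, hvf, hc⟩
  · exact absurd hg (Finset.disjoint_left.mp (R.disj_v_e v e he) h1)
  · by_cases hfe : f = e
    · subst hfe
      exact h2
    · exact absurd h1 (Finset.disjoint_right.mp (R.disj_ee f hf e he hfe) hg)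
  · exact absurd h1 (Finset.disjoint_left.mp (R.disj_e_b e he v f hf hvf) hg)
  · rcases hc with ⟨hgb, _⟩ | ⟨_, hgv⟩
    · refine absurd ?_ (Finset.disjoint_left.mp (R.disj_e_b e he v f hf hvf) hg)
      rw [hgb]
      exact bp_mem R hf hvf
    · refine absurd hg (Finset.disjoint_left.mp (R.disj_v_e v e he) ?_)
      rw [hgv]
      exact vp_mem R v
  · rcases hc with ⟨hgb, _⟩ | ⟨_, hge⟩
    · refine absurd ?_ (Finset.disjoint_left.mp (R.disj_e_b e he v f hf hvf) hg)
      rw [hgb]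
      exact bp_mem R hf hvf
    · by_cases hfe : f = e
      · subst hfe
        exact absurd hge hne
      · refine absurd ?_ (Finset.disjoint_right.mp (R.disj_ee f hf e he hfe) hg)
        rw [hge]
        exact ep_mem R hf

private lemma closed_Pve (R : AvgEQReduction H k G Pv Pe Pve vp ep bp) {v : V} {e : Sym2 V}
    (he : e ∈ H.edgeSet) (hv : v ∈ e) :
    ∀ g ∈ Pve v e, g ≠ bp v e → ∀ z, G.Adj g z → z ∈ Pve v e := by
  intro g hg hne z hadj
  rcases R.adj_cases g z hadj with ⟨w, h1, h2⟩ | ⟨f, hf, h1, h2⟩ | ⟨w, f, hf, hwf, h1, h2⟩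
    | ⟨w, f, hf, hwf, hc⟩ | ⟨w, f, hf, hwf, hc⟩
  · exact absurd hg (Finset.disjoint_left.mp (R.disj_v_b w v e he hv) h1)
  · exact absurd hg (Finset.disjoint_left.mp (R.disj_e_b f hf v e he hv) h1)
  · by_cases hwfve : (w, f) = (v, e)
    · rw [Prod.mk.injEq] at hwfve
      obtain ⟨rfl, rfl⟩ := hwfve
      exact h2
    · exact absurd h1
        (Finset.disjoint_right.mp (R.disj_bb w f hf hwf v e he hv hwfve) hg)
  · rcases hc with ⟨hgb, _⟩ | ⟨_, hgv⟩
    · by_cases hwfve : (w, f) = (v, e)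
      · rw [Prod.mk.injEq] at hwfve
        obtain ⟨rfl, rfl⟩ := hwfve
        exact absurd hgb hne
      · refine absurd ?_
          (Finset.disjoint_right.mp (R.disj_bb w f hf hwf v e he hv hwfve) hg)
        rw [hgb]
        exact bp_mem R hf hwf
    · refine absurd hg (Finset.disjoint_left.mp (R.disj_v_b w v e he hv) ?_)
      rw [hgv]
      exact vp_mem R w
  · rcases hc with ⟨hgb, _⟩ | ⟨_, hge⟩
    · by_cases hwfve : (w, f) = (v, e)
      · rw [Prod.mk.injEq] at hwfve
        obtain ⟨rfl, rfl⟩ := hwfve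
        exact absurd hgb hne
      · refine absurd ?_
          (Finset.disjoint_right.mp (R.disj_bb w f hf hwf v e he hv hwfve) hg)
        rw [hgb]
        exact bp_mem R hf hwf
    · refine absurd hg (Finset.disjoint_left.mp (R.disj_e_b f hf v e he hv) ?_)
      rw [hge]
      exact ep_mem R hf

private lemma nbr_ep (R : AvgEQReduction H k G Pv Pe Pve vp ep bp) {e : Sym2 V}
    (he : e ∈ H.edgeSet) {z : N} (hadj : G.Adj (ep e) z) :
    z ∈ Pe e ∨ ∃ v, v ∈ e ∧ z = bp v e := by
  have hee : ep e ∈ Pe e := ep_mem R he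
  rcases R.adj_cases (ep e) z hadj with ⟨v, h1, h2⟩ | ⟨f, hf, h1, h2⟩
    | ⟨v, f, hf, hvf, h1, h2⟩ | ⟨v, f, hf, hvf, hc⟩ | ⟨v, f, hf, hvf, hc⟩
  · exact absurd h1 (Finset.disjoint_right.mp (R.disj_v_e v e he) hee)
  · by_cases hfe : f = e
    · subst hfe
      exact Or.inl h2
    · exact absurd h1 (Finset.disjoint_right.mp (R.disj_ee f hf e he hfe) hee)
  · exact absurd h1 (Finset.disjoint_left.mp (R.disj_e_b e he v f hf hvf) hee)
  · rcases hc with ⟨hgb, _⟩ | ⟨_, hgv⟩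
    · refine absurd ?_ (Finset.disjoint_left.mp (R.disj_e_b e he v f hf hvf) hee)
      rw [hgb]
      exact bp_mem R hf hvf
    · refine absurd hee (Finset.disjoint_left.mp (R.disj_v_e v e he) ?_)
      rw [hgv]
      exact vp_mem R v
  · rcases hc with ⟨hgb, _⟩ | ⟨hzb, hge⟩
    · refine absurd ?_ (Finset.disjoint_left.mp (R.disj_e_b e he v f hf hvf) hee)
      rw [hgb]
      exact bp_mem R hf hvf
    · by_cases hfe : f = e
      · subst hfe
        exact Or.inr ⟨v, hvf, hzb⟩
      · refine absurd ?_ (Finset.disjoint_right.mp (R.disj_ee f hf e he hfe) hee)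
        rw [hge]
        exact ep_mem R hf

private lemma nbr_bp (R : AvgEQReduction H k G Pv Pe Pve vp ep bp) {v : V} {e : Sym2 V}
    (he : e ∈ H.edgeSet) (hv : v ∈ e) {z : N} (hadj : G.Adj (bp v e) z) :
    z ∈ Pve v e ∨ z = vp v ∨ z = ep e := by
  have hbb : bp v e ∈ Pve v e := bp_mem R he hv
  rcases R.adj_cases (bp v e) z hadj with ⟨w, h1, h2⟩ | ⟨f, hf, h1, h2⟩
    | ⟨w, f, hf, hwf, h1, h2⟩ | ⟨w, f, hf, hwf, hc⟩ | ⟨w, f, hf, hwf, hc⟩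
  · exact absurd hbb (Finset.disjoint_left.mp (R.disj_v_b w v e he hv) h1)
  · exact absurd hbb (Finset.disjoint_left.mp (R.disj_e_b f hf v e he hv) h1)
  · by_cases hwfve : (w, f) = (v, e)
    · rw [Prod.mk.injEq] at hwfve
      obtain ⟨rfl, rfl⟩ := hwfve
      exact Or.inl h2
    · exact absurd h1
        (Finset.disjoint_right.mp (R.disj_bb w f hf hwf v e he hv hwfve) hbb)
  · rcases hc with ⟨hgb, hzv⟩ | ⟨_, hgv⟩
    · by_cases hwfve : (w, f) = (v, e)
      · rw [Prod.mk.injEq] at hwfve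
        obtain ⟨rfl, rfl⟩ := hwfve
        exact Or.inr (Or.inl hzv)
      · refine absurd ?_
          (Finset.disjoint_right.mp (R.disj_bb w f hf hwf v e he hv hwfve) hbb)
        rw [hgb]
        exact bp_mem R hf hwf
    · refine absurd hbb (Finset.disjoint_left.mp (R.disj_v_b w v e he hv) ?_)
      rw [hgv]
      exact vp_mem R w
  · rcases hc with ⟨hgb, hze⟩ | ⟨_, hge⟩
    · by_cases hwfve : (w, f) = (v, e)
      · rw [Prod.mk.injEq] at hwfve
        obtain ⟨rfl, rfl⟩ := hwfve
        exact Or.inr (Or.inr hze)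
      · refine absurd ?_
          (Finset.disjoint_right.mp (R.disj_bb w f hf hwf v e he hv hwfve) hbb)
        rw [hgb]
        exact bp_mem R hf hwf
    · refine absurd hbb (Finset.disjoint_left.mp (R.disj_e_b f hf v e he hv) ?_)
      rw [hge]
      exact ep_mem R hf

/-! ### Counting the players -/

private lemma nN_bound (R : AvgEQReduction H k G Pv Pe Pve vp ep bp) :
    avgK' k * (Fintype.card V + H.edgeFinset.card) ≤ Fintype.card N := by
  classical
  have hPvcard : ∀ v : V, (Pv v).card = avgK' k := by
    intro v
    obtain ⟨m, f, hD⟩ := R.dome_v v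
    exact hD.card_eq
  have hPecard : ∀ e ∈ H.edgeFinset, (Pe e).card = avgK' k := by
    intro e he
    obtain ⟨m, f, hD⟩ := R.dome_e e (SimpleGraph.mem_edgeFinset.mp he)
    exact hD.card_eq
  have h1 : ((Finset.univ : Finset V).biUnion Pv).card = Fintype.card V * avgK' k := by
    rw [Finset.card_biUnion (fun a _ b _ hab => R.disj_vv a b hab)]
    rw [Finset.sum_congr rfl (fun v _ => hPvcard v), Finset.sum_const, smul_eq_mul,
      Finset.card_univ]
  have h2 : (H.edgeFinset.biUnion Pe).card = H.edgeFinset.card * avgK' k := by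
    rw [Finset.card_biUnion (fun a ha b hb hab =>
      R.disj_ee a (SimpleGraph.mem_edgeFinset.mp ha) b (SimpleGraph.mem_edgeFinset.mp hb) hab)]
    rw [Finset.sum_congr rfl hPecard, Finset.sum_const, smul_eq_mul]
  have hdisj : Disjoint ((Finset.univ : Finset V).biUnion Pv) (H.edgeFinset.biUnion Pe) := by
    rw [Finset.disjoint_biUnion_left]
    intro v _
    rw [Finset.disjoint_biUnion_right]
    intro e he
    exact R.disj_v_e v e (SimpleGraph.mem_edgeFinset.mp he)
  have hunion := Finset.card_union_of_disjoint hdisj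
  have hle : ((Finset.univ : Finset V).biUnion Pv ∪ H.edgeFinset.biUnion Pe).card
      ≤ Fintype.card N := Finset.card_le_univ _
  calc avgK' k * (Fintype.card V + H.edgeFinset.card)
      = Fintype.card V * avgK' k + H.edgeFinset.card * avgK' k := by ring
    _ = ((Finset.univ : Finset V).biUnion Pv ∪ H.edgeFinset.biUnion Pe).card := by
        rw [hunion, h1, h2]
    _ ≤ Fintype.card N := hle

end Reduction

end Claim3Proof

/-- Claim 3: in the avg-EQ reduction instance, if a coalition `C` blocks `Γ` and the
edge player of an edge `e = xy` belongs to `C`, then `b_{x,e}, b_{y,e}, x', y' ∈ C`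
and `|C| < k'`. -/
theorem avgEQ_edge_player_in_blocking {V N : Type*} [Fintype V] [DecidableEq V]
    [Fintype N] [DecidableEq N]
    (H : SimpleGraph V) (k : ℕ) (hk : 4 ≤ k)
    (hsize : k ^ 2 ≤ Fintype.card V + H.edgeFinset.card)
    (G : SimpleGraph N) (Pv : V → Finset N) (Pe : Sym2 V → Finset N)
    (Pve : V → Sym2 V → Finset N)
    (vp : V → N) (ep : Sym2 V → N) (bp : V → Sym2 V → N)
    (R : AvgEQReduction H k G Pv Pe Pve vp ep bp)
    (Γ : CoalitionStructure N) (hΓ : IsAvgGamma H Pv Pe Pve Γ)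
    (C : Finset N) (hC : Blocks (utilAvgEQ G) Γ C)
    (x y : V) (hxy : H.Adj x y) (he : ep s(x, y) ∈ C) :
    bp x s(x, y) ∈ C ∧ bp y s(x, y) ∈ C ∧ vp x ∈ C ∧ vp y ∈ C ∧ C.card < avgK' k := by
  classical
  obtain ⟨hΓv, hΓe, hΓve⟩ := hΓ
  obtain ⟨hK23, hk2K, h2K3k⟩ := avgK'_facts hk
  have hedge : s(x, y) ∈ H.edgeSet := H.mem_edgeSet.mpr hxy
  have hxe : x ∈ s(x, y) := Sym2.mem_mk_left x y
  have hye : y ∈ s(x, y) := Sym2.mem_mk_right x y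
  obtain ⟨me, fe, hGe⟩ := R.dome_e (s(x, y)) hedge
  obtain ⟨mx, fxr, hGx⟩ := R.dome_ve x (s(x, y)) hedge hxe
  obtain ⟨my, fyr, hGy⟩ := R.dome_ve y (s(x, y)) hedge hye
  have hcount := nN_bound R
  have hnk : avgK' k * k ^ 2 ≤ Fintype.card N :=
    le_trans (Nat.mul_le_mul_left _ hsize) hcount
  have hn2 : 2 * avgK' k ^ 2 ≤ 3 * Fintype.card N := by nlinarith
  have h16 : 16 ≤ k ^ 2 := by nlinarith
  have hn3K : 3 * avgK' k ≤ Fintype.card N := by nlinarith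
  have hKZ : (23 : ℤ) ≤ (avgK' k : ℤ) := by exact_mod_cast hK23
  have hn3KZ : 3 * (avgK' k : ℤ) ≤ (Fintype.card N : ℤ) := by exact_mod_cast hn3K
  have hC1 : (1 : ℤ) ≤ (C.card : ℤ) := by
    have : 0 < C.card := card_pos.mpr ⟨ep s(x, y), he⟩
    exact_mod_cast this
  have hnpos : (0 : ℤ) < (Fintype.card N : ℤ) + 1 := by linarith
  have hΓPe : ∀ i ∈ Pe s(x, y), Γ.part i = Pe s(x, y) := hΓe _ hedge
  have hΓPx : ∀ i ∈ Pve x s(x, y), Γ.part i = Pve x s(x, y) := hΓve x _ hedge hxe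
  have hΓPy : ∀ i ∈ Pve y s(x, y), Γ.part i = Pve y s(x, y) := hΓve y _ hedge hye
  have hclE := closed_Pe R hedge
  have hclX := closed_Pve R hedge hxe
  have hclY := closed_Pve R hedge hye
  -- no base players of the three relevant gadgets are in C
  have hbaseE : ∀ z ∈ domeBase (Pe s(x, y)) (ep s(x, y)) me, z ∉ C :=
    claim1 hGe hclE hΓPe hC he top_not_mem_base
      (fun i h => hGe.mid_ne_top i h.symm) hK23 hn2
  have hepPve_x : ep s(x, y) ∉ Pve x s(x, y) :=
    Finset.disjoint_left.mp (R.disj_e_b _ hedge x _ hedge hxe) (ep_mem R hedge)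
  have hepPve_y : ep s(x, y) ∉ Pve y s(x, y) :=
    Finset.disjoint_left.mp (R.disj_e_b _ hedge y _ hedge hye) (ep_mem R hedge)
  have hbaseX : ∀ z ∈ domeBase (Pve x s(x, y)) (bp x s(x, y)) mx, z ∉ C :=
    claim1 hGx hclX hΓPx hC he (fun h => hepPve_x (base_subset_P h))
      (fun i h => hepPve_x (h ▸ hGx.mid_mem i)) hK23 hn2
  have hbaseY : ∀ z ∈ domeBase (Pve y s(x, y)) (bp y s(x, y)) my, z ∉ C :=
    claim1 hGy hclY hΓPy hC he (fun h => hepPve_y (base_subset_P h))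
      (fun i h => hepPve_y (h ▸ hGy.mid_mem i)) hK23 hn2
  -- top degrees in C are at most 4
  have card4 : ∀ (s : Finset N) (a b c d : N), s ⊆ {a, b, c, d} → s.card ≤ 4 := by
    intro s a b c d hs
    refine (card_le_card hs).trans ?_
    refine (card_insert_le _ _).trans (Nat.succ_le_succ ?_)
    refine (card_insert_le _ _).trans (Nat.succ_le_succ ?_)
    refine (card_insert_le _ _).trans (Nat.succ_le_succ ?_)
    simp
  have hfin2 : ∀ i : Fin 2, i = 0 ∨ i = 1 := by
    intro i
    rcases i with ⟨iv, hiv⟩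
    interval_cases iv
    · exact Or.inl rfl
    · exact Or.inr rfl
  have htopE4 : (friendsIn G C (ep s(x, y))).card ≤ 4 := by
    apply card4 _ (me 0) (me 1) (bp x s(x, y)) (bp y s(x, y))
    intro z hz
    obtain ⟨hzC, hadj⟩ := mem_friendsIn.mp hz
    rcases nbr_ep R hedge hadj with hzP | ⟨v, hv, rfl⟩
    · obtain ⟨i, rfl⟩ := (adj_top_iff hGe hzP).mp hadj
      rcases hfin2 i with rfl | rfl <;> simp
    · rcases Sym2.mem_iff.mp hv with rfl | rfl <;> simp
  have htopX4 : (friendsIn G C (bp x s(x, y))).card ≤ 4 := by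
    apply card4 _ (mx 0) (mx 1) (vp x) (ep s(x, y))
    intro z hz
    obtain ⟨hzC, hadj⟩ := mem_friendsIn.mp hz
    rcases nbr_bp R hedge hxe hadj with hzP | rfl | rfl
    · obtain ⟨i, rfl⟩ := (adj_top_iff hGx hzP).mp hadj
      rcases hfin2 i with rfl | rfl <;> simp
    · simp
    · simp
  have htopY4 : (friendsIn G C (bp y s(x, y))).card ≤ 4 := by
    apply card4 _ (my 0) (my 1) (vp y) (ep s(x, y))
    intro z hz
    obtain ⟨hzC, hadj⟩ := mem_friendsIn.mp hz
    rcases nbr_bp R hedge hye hadj with hzP | rfl | rfl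
    · obtain ⟨i, rfl⟩ := (adj_top_iff hGy hzP).mp hadj
      rcases hfin2 i with rfl | rfl <;> simp
    · simp
    · simp
  -- no mid players of the three gadgets are in C
  have hmidE : ∀ i, me i ∉ C := fun i hmi =>
    no_mid_in_C hGe hclE hΓPe hC hbaseE htopE4 hK23 hn2 hmi
  have hmidX : ∀ i, mx i ∉ C := fun i hmi =>
    no_mid_in_C hGx hclX hΓPx hC hbaseX htopX4 hK23 hn2 hmi
  have hmidY : ∀ i, my i ∉ C := fun i hmi =>
    no_mid_in_C hGy hclY hΓPy hC hbaseY htopY4 hK23 hn2 hmi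
  -- distinctness facts
  have hbxby : bp x s(x, y) ≠ bp y s(x, y) := by
    intro h
    have hpair : ((x, s(x, y)) : V × Sym2 V) ≠ (y, s(x, y)) := by
      intro hp
      exact hxy.ne (Prod.ext_iff.mp hp).1
    exact Finset.disjoint_left.mp (R.disj_bb x _ hedge hxe y _ hedge hye hpair)
      (bp_mem R hedge hxe) (by rw [h]; exact bp_mem R hedge hye)
  have hepbx : ep s(x, y) ≠ bp x s(x, y) := fun h =>
    hepPve_x (by rw [h]; exact bp_mem R hedge hxe)
  have hepby : ep s(x, y) ≠ bp y s(x, y) := fun h =>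
    hepPve_y (by rw [h]; exact bp_mem R hedge hye)
  have hvxep : vp x ≠ ep s(x, y) := fun h =>
    Finset.disjoint_left.mp (R.disj_v_e x _ hedge) (vp_mem R x)
      (by rw [h]; exact ep_mem R hedge)
  have hvyep : vp y ≠ ep s(x, y) := fun h =>
    Finset.disjoint_left.mp (R.disj_v_e y _ hedge) (vp_mem R y)
      (by rw [h]; exact ep_mem R hedge)
  -- friend characterizations
  have hepfr_sub : ∀ z ∈ friendsIn G C (ep s(x, y)),
      z = bp x s(x, y) ∨ z = bp y s(x, y) := by
    intro z hz
    obtain ⟨hzC, hadj⟩ := mem_friendsIn.mp hz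
    rcases nbr_ep R hedge hadj with hzP | ⟨v, hv, rfl⟩
    · obtain ⟨i, rfl⟩ := (adj_top_iff hGe hzP).mp hadj
      exact absurd hzC (hmidE i)
    · rcases Sym2.mem_iff.mp hv with rfl | rfl
      · exact Or.inl rfl
      · exact Or.inr rfl
  have hbxfr_sub : ∀ z ∈ friendsIn G C (bp x s(x, y)), z = vp x ∨ z = ep s(x, y) := by
    intro z hz
    obtain ⟨hzC, hadj⟩ := mem_friendsIn.mp hz
    rcases nbr_bp R hedge hxe hadj with hzP | rfl | rfl
    · obtain ⟨i, rfl⟩ := (adj_top_iff hGx hzP).mp hadj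
      exact absurd hzC (hmidX i)
    · exact Or.inl rfl
    · exact Or.inr rfl
  have hbyfr_sub : ∀ z ∈ friendsIn G C (bp y s(x, y)), z = vp y ∨ z = ep s(x, y) := by
    intro z hz
    obtain ⟨hzC, hadj⟩ := mem_friendsIn.mp hz
    rcases nbr_bp R hedge hye hadj with hzP | rfl | rfl
    · obtain ⟨i, rfl⟩ := (adj_top_iff hGy hzP).mp hadj
      exact absurd hzC (hmidY i)
    · exact Or.inl rfl
    · exact Or.inr rfl
  have hfBxle : ((friendsIn G C (bp x s(x, y))).card : ℤ) ≤ 2 := by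
    have hsub : friendsIn G C (bp x s(x, y)) ⊆ insert (vp x) {ep s(x, y)} := by
      intro z hz
      rcases hbxfr_sub z hz with rfl | rfl
      · exact mem_insert_self _ _
      · exact mem_insert.mpr (Or.inr (mem_singleton_self _))
    have h := (card_le_card hsub).trans ((card_insert_le _ _).trans
      (by rw [card_singleton] : ({ep s(x, y)} : Finset N).card + 1 ≤ 2))
    exact_mod_cast h
  have hfByle : ((friendsIn G C (bp y s(x, y))).card : ℤ) ≤ 2 := by
    have hsub : friendsIn G C (bp y s(x, y)) ⊆ insert (vp y) {ep s(x, y)} := by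
      intro z hz
      rcases hbyfr_sub z hz with rfl | rfl
      · exact mem_insert_self _ _
      · exact mem_insert.mpr (Or.inr (mem_singleton_self _))
    have h := (card_le_card hsub).trans ((card_insert_le _ _).trans
      (by rw [card_singleton] : ({ep s(x, y)} : Finset N).card + 1 ≤ 2))
    exact_mod_cast h
  -- the blocking inequality at the edge player
  have hineq := blocks_ineq hC he (hΓPe _ hGe.top_mem)
  have hPKe : ((Pe s(x, y)).card : ℤ) = (avgK' k : ℤ) := by exact_mod_cast hGe.card_eq
  rw [AP_top hGe, sP_top hGe, hPKe] at hineq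
  by_cases hbx : bp x s(x, y) ∈ C
  · by_cases hby : bp y s(x, y) ∈ C
    · -- both incidence players in C
      have hfrE : friendsIn G C (ep s(x, y)) = {bp x s(x, y), bp y s(x, y)} := by
        ext z
        constructor
        · intro hz
          rcases hepfr_sub z hz with rfl | rfl
          · exact mem_insert_self _ _
          · exact mem_insert.mpr (Or.inr (mem_singleton_self _))
        · intro hz
          rcases mem_insert.mp hz with rfl | hz
          · exact mem_friendsIn.mpr ⟨hbx, (R.adj_be x _ hedge hxe).symm⟩
          · rw [mem_singleton] at hz
            subst hz
            exact mem_friendsIn.mpr ⟨hby, (R.adj_be y _ hedge hye).symm⟩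
      rw [hfrE] at hineq
      have hfE2 : ((friendsIn G C (ep s(x, y))).card : ℤ) = 2 := by
        rw [hfrE, card_insert_of_notMem (by simp [hbxby]), card_singleton]
        norm_num
      have hsC3 : (((insert (ep s(x, y)) {bp x s(x, y), bp y s(x, y)}) : Finset N).card : ℤ)
          = 3 := by
        rw [card_insert_of_notMem (by simp [hepbx, hepby]),
          card_insert_of_notMem (by simp [hbxby]), card_singleton]
        norm_num
      have hsum : (∑ g ∈ (insert (ep s(x, y)) {bp x s(x, y), bp y s(x, y)} : Finset N),
            ((friendsIn G C g).card : ℤ))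
          = ((friendsIn G C (ep s(x, y))).card : ℤ)
            + (((friendsIn G C (bp x s(x, y))).card : ℤ)
              + ((friendsIn G C (bp y s(x, y))).card : ℤ)) := by
        rw [Finset.sum_insert (by simp [hepbx, hepby]),
          Finset.sum_insert (by simp [hbxby]), Finset.sum_singleton]
      rw [hsC3, hsum, hfE2] at hineq
      by_cases hvx : vp x ∈ C
      · by_cases hvy : vp y ∈ C
        · -- the good case: compute everything exactly
          have hfrBx : friendsIn G C (bp x s(x, y)) = {vp x, ep s(x, y)} := by
            ext z
            constructor
            · intro hz
              rcases hbxfr_sub z hz with rfl | rfl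
              · exact mem_insert_self _ _
              · exact mem_insert.mpr (Or.inr (mem_singleton_self _))
            · intro hz
              rcases mem_insert.mp hz with rfl | hz
              · exact mem_friendsIn.mpr ⟨hvx, R.adj_bv x _ hedge hxe⟩
              · rw [mem_singleton] at hz
                subst hz
                exact mem_friendsIn.mpr ⟨he, R.adj_be x _ hedge hxe⟩
          have hfrBy : friendsIn G C (bp y s(x, y)) = {vp y, ep s(x, y)} := by
            ext z
            constructor
            · intro hz
              rcases hbyfr_sub z hz with rfl | rfl
              · exact mem_insert_self _ _
              · exact mem_insert.mpr (Or.inr (mem_singleton_self _))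
            · intro hz
              rcases mem_insert.mp hz with rfl | hz
              · exact mem_friendsIn.mpr ⟨hvy, R.adj_bv y _ hedge hye⟩
              · rw [mem_singleton] at hz
                subst hz
                exact mem_friendsIn.mpr ⟨he, R.adj_be y _ hedge hye⟩
          have hfBx : ((friendsIn G C (bp x s(x, y))).card : ℤ) = 2 := by
            rw [hfrBx, card_insert_of_notMem (by simp [hvxep]), card_singleton]
            norm_num
          have hfBy : ((friendsIn G C (bp y s(x, y))).card : ℤ) = 2 := by
            rw [hfrBy, card_insert_of_notMem (by simp [hvyep]), card_singleton]
            norm_num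
          rw [hfBx, hfBy] at hineq
          have hlt : (C.card : ℤ) < (avgK' k : ℤ) := by nlinarith [hineq]
          exact ⟨hbx, hby, hvx, hvy, by exact_mod_cast hlt⟩
        · exfalso
          have hfBy1 : ((friendsIn G C (bp y s(x, y))).card : ℤ) ≤ 1 := by
            have hsub : friendsIn G C (bp y s(x, y)) ⊆ {ep s(x, y)} := by
              intro z hz
              rcases hbyfr_sub z hz with rfl | rfl
              · exact absurd (mem_friendsIn.mp hz).1 hvy
              · exact mem_singleton_self _
            have h := (card_le_card hsub).trans (by simp : ({ep s(x, y)} : Finset N).card ≤ 1)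
            exact_mod_cast h
          nlinarith [hineq, hfBy1, hfBxle, hC1, hKZ, hn3KZ, hnpos]
      · exfalso
        have hfBx1 : ((friendsIn G C (bp x s(x, y))).card : ℤ) ≤ 1 := by
          have hsub : friendsIn G C (bp x s(x, y)) ⊆ {ep s(x, y)} := by
            intro z hz
            rcases hbxfr_sub z hz with rfl | rfl
            · exact absurd (mem_friendsIn.mp hz).1 hvx
            · exact mem_singleton_self _
          have h := (card_le_card hsub).trans (by simp : ({ep s(x, y)} : Finset N).card ≤ 1)
          exact_mod_cast h
        nlinarith [hineq, hfBx1, hfByle, hC1, hKZ, hn3KZ, hnpos]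
    · exfalso
      have hfrE : friendsIn G C (ep s(x, y)) = {bp x s(x, y)} := by
        ext z
        constructor
        · intro hz
          rcases hepfr_sub z hz with rfl | rfl
          · exact mem_singleton_self _
          · exact absurd (mem_friendsIn.mp hz).1 hby
        · intro hz
          rw [mem_singleton] at hz
          subst hz
          exact mem_friendsIn.mpr ⟨hbx, (R.adj_be x _ hedge hxe).symm⟩
      rw [hfrE] at hineq
      have hfE1 : ((friendsIn G C (ep s(x, y))).card : ℤ) = 1 := by
        rw [hfrE, card_singleton]
        norm_num
      have hsC2 : (((insert (ep s(x, y)) {bp x s(x, y)}) : Finset N).card : ℤ) = 2 := by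
        rw [card_insert_of_notMem (by simp [hepbx]), card_singleton]
        norm_num
      have hsum : (∑ g ∈ (insert (ep s(x, y)) {bp x s(x, y)} : Finset N),
            ((friendsIn G C g).card : ℤ))
          = ((friendsIn G C (ep s(x, y))).card : ℤ)
            + ((friendsIn G C (bp x s(x, y))).card : ℤ) := by
        rw [Finset.sum_insert (by simp [hepbx]), Finset.sum_singleton]
      rw [hsC2, hsum, hfE1] at hineq
      nlinarith [hineq, hfBxle, hC1, hKZ, hn3KZ, hnpos]
  · exfalso
    by_cases hby : bp y s(x, y) ∈ C
    · have hfrE : friendsIn G C (ep s(x, y)) = {bp y s(x, y)} := by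
        ext z
        constructor
        · intro hz
          rcases hepfr_sub z hz with rfl | rfl
          · exact absurd (mem_friendsIn.mp hz).1 hbx
          · exact mem_singleton_self _
        · intro hz
          rw [mem_singleton] at hz
          subst hz
          exact mem_friendsIn.mpr ⟨hby, (R.adj_be y _ hedge hye).symm⟩
      rw [hfrE] at hineq
      have hfE1 : ((friendsIn G C (ep s(x, y))).card : ℤ) = 1 := by
        rw [hfrE, card_singleton]
        norm_num
      have hsC2 : (((insert (ep s(x, y)) {bp y s(x, y)}) : Finset N).card : ℤ) = 2 := by
        rw [card_insert_of_notMem (by simp [hepby]), card_singleton]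
        norm_num
      have hsum : (∑ g ∈ (insert (ep s(x, y)) {bp y s(x, y)} : Finset N),
            ((friendsIn G C g).card : ℤ))
          = ((friendsIn G C (ep s(x, y))).card : ℤ)
            + ((friendsIn G C (bp y s(x, y))).card : ℤ) := by
        rw [Finset.sum_insert (by simp [hepby]), Finset.sum_singleton]
      rw [hsC2, hsum, hfE1] at hineq
      nlinarith [hineq, hfByle, hC1, hKZ, hn3KZ, hnpos]
    · have hfrE : friendsIn G C (ep s(x, y)) = ∅ := by
        rw [eq_empty_iff_forall_notMem]
        intro z hz
        rcases hepfr_sub z hz with rfl | rfl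
        · exact hbx (mem_friendsIn.mp hz).1
        · exact hby (mem_friendsIn.mp hz).1
      rw [hfrE] at hineq
      have hs1 : (((insert (ep s(x, y)) (∅ : Finset N))).card : ℤ) = 1 := by
        rw [LawfulSingleton.insert_empty_eq, card_singleton]
        norm_num
      have hsum : (∑ g ∈ (insert (ep s(x, y)) (∅ : Finset N)),
            ((friendsIn G C g).card : ℤ))
          = ((friendsIn G C (ep s(x, y))).card : ℤ) := by
        rw [LawfulSingleton.insert_empty_eq, Finset.sum_singleton]
      rw [hs1, hsum, hfrE] at hineq
      simp only [card_empty] at hineq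
      push_cast at hineq
      nlinarith [hineq, hC1, hKZ, hn3KZ, hnpos]
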